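/- arXiv:1511.04503 — 2 statements merged into one kernel-verified Lean document; each statement's English description precedes it below -/
import Mathlib

section
/- Let (Z,d,ν) be a metric measure space in which ν is a doubling Radon measure with doubling constant C_D, let θ ∈ [0,1] and τ ≥ 1. Then there is a constant C ≥ 1 (depending on C_D, θ, τ) and there are countable collections of balls 𝓑^k, k = 0,1,2,…, such that rad(B) is comparable to 2^{−k} for every B ∈ 𝓑^k, the balls in each collection 𝓑^k have uniformly bounded overlap even after inflating each by the factor τ, and for every f ∈ L¹(Z,ν): C⁻¹ I_θ(f,1) ≤ Σ_{k=0}^∞ Σ_{B ∈ 𝓑^k} rad(B)^{−θ} ∫_B |f − f_B| dν ≤ C I_θ(f,4). -/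
set_option linter.unusedSectionVars false
set_option linter.unusedVariables false
set_option maxHeartbeats 3000000

open MeasureTheory Metric Set ENNReal

/-- The Besov energy `I_θ(f,r) = ∫_0^r ∫_Z ⨍_{B(x,t)} |f(y) − f(x)| dν(y) dν(x) dt/t^{1+θ}`. -/
noncomputable def besovEnergy {Z : Type*} [MetricSpace Z] [MeasurableSpace Z]
    (ν : Measure Z) (f : Z → ℝ) (θ r : ℝ) : ℝ≥0∞ :=
  ∫⁻ t in Set.Ioo (0 : ℝ) r,
    (∫⁻ x, (ν (ball x t))⁻¹ * ∫⁻ y in ball x t, ENNReal.ofReal |f y - f x| ∂ν ∂ν) *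
      ENNReal.ofReal (t ^ (-(1 + θ)))

section BesovHelpers

theorem setLIntegral_mono_on3 {α : Type*} [MeasurableSpace α] {μ : Measure α}
    {s : Set α} (hs : MeasurableSet s) {g h : α → ℝ≥0∞} (hgh : ∀ t ∈ s, g t ≤ h t) :
    ∫⁻ t in s, g t ∂μ ≤ ∫⁻ t in s, h t ∂μ :=
  lintegral_mono_ae ((MeasureTheory.ae_restrict_mem hs).mono hgh)

theorem tsum_lintegral_le3 {α : Type*} [MeasurableSpace α] (μ : Measure α)
    {ι : Type*} [Countable ι] (g : ι → α → ℝ≥0∞) :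
    ∑' i, ∫⁻ a, g i a ∂μ ≤ ∫⁻ a, ∑' i, g i a ∂μ := by
  rw [ENNReal.tsum_eq_iSup_sum]
  refine iSup_le fun F => ?_
  calc ∑ i ∈ F, ∫⁻ a, g i a ∂μ ≤ ∫⁻ a, ∑ i ∈ F, g i a ∂μ := by
        classical
        induction F using Finset.induction_on with
        | empty => simp
        | insert _ _ hx ih =>
          rw [Finset.sum_insert hx]
          refine le_trans (add_le_add_right ih _) ?_
          refine le_trans (MeasureTheory.le_lintegral_add _ _) (lintegral_mono fun a => ?_)
          rw [Finset.sum_insert hx]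
    _ ≤ ∫⁻ a, ∑' i, g i a ∂μ := lintegral_mono fun a => ENNReal.sum_le_tsum F

theorem enn_inv_le3 {u v c : ℝ≥0∞} (hc0 : c ≠ 0) (hct : c ≠ ⊤) (h : u ≤ c * v) :
    v⁻¹ ≤ c * u⁻¹ := by
  have h1 : (c * v)⁻¹ ≤ u⁻¹ := ENNReal.inv_le_inv.mpr h
  calc v⁻¹ = c * (c⁻¹ * v⁻¹) := by
        rw [← mul_assoc, ENNReal.mul_inv_cancel hc0 hct, one_mul]
    _ = c * (c * v)⁻¹ := by rw [ENNReal.mul_inv (Or.inl hc0) (Or.inl hct)]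
    _ ≤ c * u⁻¹ := mul_le_mul_right h1 c

variable {Z : Type*} [MetricSpace Z] [MeasurableSpace Z] [BorelSpace Z]

theorem dbl_iter3 (ν : Measure Z) (C_D : ℝ)
    (hdbl : ∀ (z : Z) (r : ℝ), 0 < r →
      ν (ball z (2 * r)) ≤ ENNReal.ofReal C_D * ν (ball z r) ∧
        0 < ν (ball z r) ∧ ν (ball z r) < ⊤)
    (z : Z) (r : ℝ) (hr : 0 < r) (m : ℕ) :
    ν (ball z (2 ^ m * r)) ≤ (ENNReal.ofReal C_D) ^ m * ν (ball z r) := by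
  induction m with
  | zero => simp
  | succ m ih =>
    have h2 : (2 : ℝ) ^ (m + 1) * r = 2 * (2 ^ m * r) := by ring
    rw [h2]
    calc ν (ball z (2 * (2 ^ m * r))) ≤ ENNReal.ofReal C_D * ν (ball z (2 ^ m * r)) :=
          (hdbl z _ (by positivity)).1
      _ ≤ ENNReal.ofReal C_D * ((ENNReal.ofReal C_D) ^ m * ν (ball z r)) :=
          mul_le_mul_right ih _
      _ = (ENNReal.ofReal C_D) ^ (m + 1) * ν (ball z r) := by ring

theorem meas_cmp3 (ν : Measure Z) (C_D : ℝ)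
    (hdbl : ∀ (z : Z) (r : ℝ), 0 < r →
      ν (ball z (2 * r)) ≤ ENNReal.ofReal C_D * ν (ball z r) ∧
        0 < ν (ball z r) ∧ ν (ball z r) < ⊤)
    {z w : Z} {r s : ℝ} (hr : 0 < r) (m : ℕ)
    (hsub : ball w s ⊆ ball z (2 ^ m * r)) :
    ν (ball w s) ≤ (ENNReal.ofReal C_D) ^ m * ν (ball z r) :=
  le_trans (measure_mono hsub) (dbl_iter3 ν C_D hdbl z r hr m)

theorem inv_cmp3 (ν : Measure Z) (C_D : ℝ) (hCD : 1 ≤ C_D)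
    (hdbl : ∀ (z : Z) (r : ℝ), 0 < r →
      ν (ball z (2 * r)) ≤ ENNReal.ofReal C_D * ν (ball z r) ∧
        0 < ν (ball z r) ∧ ν (ball z r) < ⊤)
    {z w : Z} {r s : ℝ} (hr : 0 < r) (hs : 0 < s) (m : ℕ)
    (hsub : ball z r ⊆ ball w (2 ^ m * s)) :
    (ν (ball w s))⁻¹ ≤ (ENNReal.ofReal C_D) ^ m * (ν (ball z r))⁻¹ := by
  have hD1 : (1 : ℝ≥0∞) ≤ ENNReal.ofReal C_D := by
    simpa using ENNReal.ofReal_le_ofReal hCD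
  have hD0 : (ENNReal.ofReal C_D) ^ m ≠ 0 := by
    refine pow_ne_zero m ?_
    intro h
    rw [h] at hD1
    exact (not_le.mpr zero_lt_one) hD1
  have hDt : (ENNReal.ofReal C_D) ^ m ≠ ⊤ := pow_ne_top ofReal_ne_top
  exact enn_inv_le3 hD0 hDt (meas_cmp3 ν C_D hdbl hs m hsub)

end BesovHelpers

theorem sep_card' {Z : Type*} [MetricSpace Z] [MeasurableSpace Z] [BorelSpace Z]
    (ν : Measure Z) (C_D : ℝ) (hCD : 1 ≤ C_D)
    (hdbl : ∀ (z : Z) (r : ℝ), 0 < r →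
      ν (ball z (2 * r)) ≤ ENNReal.ofReal C_D * ν (ball z r) ∧
        0 < ν (ball z r) ∧ ν (ball z r) < ⊤)
    (z : Z) (R r : ℝ) (hr : 0 < r) (hR : 0 < R) (hrR : r ≤ R) (m : ℕ)
    (hm : 3 * R ≤ 2 ^ m * (r / 2))
    (T : Set Z) (hT : T ⊆ ball z R)
    (hsep : ∀ x ∈ T, ∀ y ∈ T, x ≠ y → r ≤ dist x y) :
    T.Finite ∧ T.ncard ≤ (max ⌈C_D⌉₊ 1) ^ m := by
  classical
  set M := max ⌈C_D⌉₊ 1 with hM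
  have hDM : ENNReal.ofReal C_D ≤ (M : ℝ≥0∞) := by
    calc ENNReal.ofReal C_D ≤ ENNReal.ofReal ((⌈C_D⌉₊ : ℕ) : ℝ) :=
          ENNReal.ofReal_le_ofReal (Nat.le_ceil C_D)
      _ = ((⌈C_D⌉₊ : ℕ) : ℝ≥0∞) := ENNReal.ofReal_natCast _
      _ ≤ (M : ℝ≥0∞) := by exact_mod_cast Nat.cast_le.mpr (le_max_left _ _)
  have key : ∀ F : Finset Z, ↑F ⊆ T → F.card ≤ M ^ m := by
    intro F hF
    have hballs : ∀ w ∈ F, ball w (r / 2) ⊆ ball z (2 * R) := by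
      intro w hw y hy
      have hwz : dist w z < R := hT (hF hw)
      have : dist y z ≤ dist y w + dist w z := dist_triangle y w z
      have : dist y z < r / 2 + R := lt_of_le_of_lt this (by
        have := mem_ball.mp hy; linarith)
      rw [mem_ball]; linarith
    have hdisj : (↑F : Set Z).PairwiseDisjoint (fun w => ball w (r / 2)) := by
      intro a ha b hb hab
      have : r ≤ dist a b := hsep a (hF ha) b (hF hb) hab
      exact ball_disjoint_ball (by linarith)
    have hsum : ∑ w ∈ F, ν (ball w (r / 2)) ≤ ν (ball z (2 * R)) := by
      rw [← measure_biUnion_finset hdisj (fun w _ => measurableSet_ball)]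
      exact measure_mono (iUnion₂_subset hballs)
    have hlow : ∀ w ∈ F, ν (ball z (2 * R)) ≤
        (ENNReal.ofReal C_D) ^ m * ν (ball w (r / 2)) := by
      intro w hw
      refine meas_cmp3 ν C_D hdbl (by positivity) m ?_
      intro y hy
      have hwz : dist w z < R := hT (hF hw)
      have hyz : dist y z < 2 * R := mem_ball.mp hy
      rw [mem_ball]
      calc dist y w ≤ dist y z + dist z w := dist_triangle y z w
        _ < 2 * R + R := by rw [dist_comm z w]; linarith
        _ = 3 * R := by ring
        _ ≤ 2 ^ m * (r / 2) := hm
    have hμpos := (hdbl z (2 * R) (by positivity)).2.1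
    have hμtop := (hdbl z (2 * R) (by positivity)).2.2
    have hcard : (F.card : ℝ≥0∞) * ν (ball z (2 * R)) ≤
        (ENNReal.ofReal C_D) ^ m * ν (ball z (2 * R)) := by
      calc (F.card : ℝ≥0∞) * ν (ball z (2 * R))
          = ∑ _w ∈ F, ν (ball z (2 * R)) := by
            rw [Finset.sum_const, nsmul_eq_mul]
        _ ≤ ∑ w ∈ F, (ENNReal.ofReal C_D) ^ m * ν (ball w (r / 2)) :=
            Finset.sum_le_sum hlow
        _ = (ENNReal.ofReal C_D) ^ m * ∑ w ∈ F, ν (ball w (r / 2)) := by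
            rw [Finset.mul_sum]
        _ ≤ (ENNReal.ofReal C_D) ^ m * ν (ball z (2 * R)) :=
            mul_le_mul_right hsum _
    have hle : (F.card : ℝ≥0∞) ≤ (ENNReal.ofReal C_D) ^ m :=
      (ENNReal.mul_le_mul_iff_left (ne_of_gt hμpos) (ne_of_lt hμtop)).mp hcard
    have : (F.card : ℝ≥0∞) ≤ ((M ^ m : ℕ) : ℝ≥0∞) := by
      refine le_trans hle ?_
      calc (ENNReal.ofReal C_D) ^ m ≤ ((M : ℕ) : ℝ≥0∞) ^ m := pow_le_pow_left' hDM m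
        _ = ((M ^ m : ℕ) : ℝ≥0∞) := by push_cast; ring
    exact_mod_cast this
  have hfin : T.Finite := by
    by_contra hinf
    obtain ⟨t, htT, htfin, htcard⟩ :=
      Set.Infinite.exists_subset_ncard_eq hinf (M ^ m + 1)
    have h2 := key htfin.toFinset (by simpa using htT)
    rw [← Set.ncard_eq_toFinset_card t htfin] at h2
    omega
  refine ⟨hfin, ?_⟩
  have h2 := key hfin.toFinset (by simp)
  rwa [← Set.ncard_eq_toFinset_card T hfin] at h2

theorem exists_maximal_sep' {Z : Type*} [MetricSpace Z] (r : ℝ) (hr : 0 < r) :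
    ∃ S : Set Z, (∀ x ∈ S, ∀ y ∈ S, x ≠ y → r ≤ dist x y) ∧
      ∀ z : Z, ∃ x ∈ S, dist z x < r := by
  have hub : ∀ c ⊆ {S : Set Z | ∀ x ∈ S, ∀ y ∈ S, x ≠ y → r ≤ dist x y},
      IsChain (· ⊆ ·) c → ∃ ub ∈ {S : Set Z | ∀ x ∈ S, ∀ y ∈ S, x ≠ y → r ≤ dist x y},
        ∀ s ∈ c, s ⊆ ub := by
    intro c hcS hchain
    refine ⟨⋃₀ c, ?_, fun s hs => subset_sUnion_of_mem hs⟩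
    intro x hx y hy hxy
    obtain ⟨s, hsc, hxs⟩ := hx
    obtain ⟨t, htc, hyt⟩ := hy
    rcases hchain.total hsc htc with h | h
    · exact hcS htc x (h hxs) y hyt hxy
    · exact hcS hsc x hxs y (h hyt) hxy
  obtain ⟨Msep, hMsep⟩ := zorn_subset
    {S : Set Z | ∀ x ∈ S, ∀ y ∈ S, x ≠ y → r ≤ dist x y} hub
  refine ⟨Msep, hMsep.prop, fun z => ?_⟩
  by_contra hcov
  push_neg at hcov
  have hzM : z ∉ Msep := fun hz => absurd (show dist z z < r by simpa using hr) (by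
    exact not_lt.mpr (hcov z hz))
  have hins : insert z Msep ∈
      {S : Set Z | ∀ x ∈ S, ∀ y ∈ S, x ≠ y → r ≤ dist x y} := by
    intro x hx y hy hxy
    rcases hx with rfl | hx
    · rcases hy with rfl | hy
      · exact absurd rfl hxy
      · exact hcov y hy
    · rcases hy with rfl | hy
      · rw [dist_comm]; exact hcov x hx
      · exact hMsep.prop x hx y hy hxy
  have := hMsep.eq_of_subset hins (subset_insert z Msep)
  exact hzM (this ▸ mem_insert z Msep)


theorem avg_diff_le3 {Z : Type*} [MetricSpace Z] [MeasurableSpace Z] [BorelSpace Z]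
    {ν : Measure Z} {f : Z → ℝ} (hf : Integrable f ν) (z : Z) (R : ℝ)
    (hν0 : ν (ball z R) ≠ 0) (hνt : ν (ball z R) ≠ ⊤) (x : Z) :
    ENNReal.ofReal |f x - ⨍ w in ball z R, f w ∂ν| ≤
      (ν (ball z R))⁻¹ * ∫⁻ y in ball z R, ENNReal.ofReal |f x - f y| ∂ν := by
  set B := ball z R with hB
  set μB := (ν B).toReal with hμB
  have hμBpos : 0 < μB := ENNReal.toReal_pos hν0 hνt
  have hfint : Integrable f (ν.restrict B) := hf.restrict
  have hcint : Integrable (fun _ : Z => f x) (ν.restrict B) := by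
    refine integrable_const_iff.mpr (Or.inr ?_)
    refine ⟨?_⟩
    rw [Measure.restrict_apply_univ]
    exact hνt.lt_top
  have h1 : f x - ⨍ w in B, f w ∂ν = μB⁻¹ * ∫ y in B, (f x - f y) ∂ν := by
    have havg : (⨍ w in B, f w ∂ν) = μB⁻¹ * ∫ y in B, f y ∂ν := by
      rw [setAverage_eq, smul_eq_mul]
      rfl
    have hint : (∫ y in B, (f x - f y) ∂ν) = μB * f x - ∫ y in B, f y ∂ν := by
      rw [integral_sub hcint hfint, setIntegral_const, smul_eq_mul]
      rfl
    rw [havg, hint]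
    field_simp
  have h2' : |∫ y in B, (f x - f y) ∂ν| ≤ ∫ y in B, |f x - f y| ∂ν := by
    simpa [Real.norm_eq_abs] using
      norm_integral_le_integral_norm (μ := ν.restrict B) (fun y => f x - f y)
  have h2 : |f x - ⨍ w in B, f w ∂ν| ≤ μB⁻¹ * ∫ y in B, |f x - f y| ∂ν := by
    rw [h1, abs_mul, abs_of_nonneg (inv_nonneg.mpr hμBpos.le)]
    exact mul_le_mul_of_nonneg_left h2' (inv_nonneg.mpr hμBpos.le)
  have h3 : ENNReal.ofReal |f x - ⨍ w in B, f w ∂ν|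
      ≤ ENNReal.ofReal (μB⁻¹ * ∫ y in B, |f x - f y| ∂ν) := ENNReal.ofReal_le_ofReal h2
  have h4 : ENNReal.ofReal (μB⁻¹ * ∫ y in B, |f x - f y| ∂ν)
      = ENNReal.ofReal μB⁻¹ * ENNReal.ofReal (∫ y in B, |f x - f y| ∂ν) :=
    ENNReal.ofReal_mul (inv_nonneg.mpr hμBpos.le)
  have h5 : ENNReal.ofReal (∫ y in B, |f x - f y| ∂ν)
      = ∫⁻ y in B, ENNReal.ofReal |f x - f y| ∂ν :=
    MeasureTheory.ofReal_integral_eq_lintegral_ofReal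
      ((hcint.sub hfint).abs) (Filter.Eventually.of_forall fun y => abs_nonneg _)
  have h6 : ENNReal.ofReal μB⁻¹ = (ν B)⁻¹ := by
    rw [ENNReal.ofReal_inv_of_pos hμBpos, hμB, ENNReal.ofReal_toReal hνt]
  rw [h4, h5, h6] at h3
  exact h3


theorem weight_int_lower3 {θ : ℝ} (hθ0 : 0 ≤ θ) (hθ1 : θ ≤ 1) {ρ : ℝ} (hρ : 0 < ρ) :
    ENNReal.ofReal ((9 / 8 * ρ) ^ (-θ) / 16) ≤
      ∫⁻ t in Ico (3 * ρ) (4 * ρ), ENNReal.ofReal (t ^ (-(1 + θ))) := by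
  have h4ρ : (0:ℝ) < 4 * ρ := by linarith
  have hstep : ∀ t ∈ Ico (3 * ρ) (4 * ρ),
      ENNReal.ofReal ((4 * ρ) ^ (-(1 + θ))) ≤ ENNReal.ofReal (t ^ (-(1 + θ))) := by
    intro t ht
    refine ENNReal.ofReal_le_ofReal ?_
    exact Real.rpow_le_rpow_of_nonpos (by linarith [ht.1]) (le_of_lt ht.2) (by linarith)
  calc ENNReal.ofReal ((9 / 8 * ρ) ^ (-θ) / 16)
      ≤ ENNReal.ofReal ((4 * ρ) ^ (-(1 + θ)) * ρ) := by
        refine ENNReal.ofReal_le_ofReal ?_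
        have e1 : (4 * ρ) ^ (-(1 + θ)) = (4 * ρ)⁻¹ * (4 * ρ) ^ (-θ) := by
          rw [show -(1 + θ) = (-1) + (-θ) by ring, Real.rpow_add h4ρ, Real.rpow_neg_one]
        have e2 : (4 * ρ : ℝ) ^ (-θ) = (4:ℝ) ^ (-θ) * ρ ^ (-θ) :=
          Real.mul_rpow (by norm_num) hρ.le
        have e3 : (9 / 8 * ρ : ℝ) ^ (-θ) = (9/8:ℝ) ^ (-θ) * ρ ^ (-θ) :=
          Real.mul_rpow (by norm_num) hρ.le
        have h98 : (9/8:ℝ) ^ (-θ) ≤ 1 :=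
          Real.rpow_le_one_of_one_le_of_nonpos (by norm_num) (by linarith)
        have h4 : (1/4 : ℝ) ≤ (4:ℝ) ^ (-θ) := by
          have h' : (4:ℝ) ^ (-1 : ℝ) ≤ (4:ℝ) ^ (-θ) :=
            (Real.rpow_le_rpow_left_iff (by norm_num)).mpr (by linarith)
          rw [Real.rpow_neg_one] at h'
          norm_num at h' ⊢
          linarith
        have hρθ : (0:ℝ) < ρ ^ (-θ) := Real.rpow_pos_of_pos hρ _
        rw [e1, e2, e3]
        have haρ : (4 * ρ)⁻¹ * ρ = 1/4 := by field_simp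
        have key : (4 * ρ)⁻¹ * ((4:ℝ) ^ (-θ) * ρ ^ (-θ)) * ρ
              = ((4:ℝ) ^ (-θ)) * (ρ ^ (-θ)) * ((4 * ρ)⁻¹ * ρ) := by ring
        rw [key, haρ]
        have p1 := mul_le_mul_of_nonneg_right h98 hρθ.le
        have p2 := mul_le_mul_of_nonneg_right h4 hρθ.le
        nlinarith
    _ = ENNReal.ofReal ((4 * ρ) ^ (-(1 + θ))) * volume (Ico (3 * ρ) (4 * ρ)) := by
        rw [Real.volume_Ico, show (4 * ρ - 3 * ρ) = ρ by ring,
          ← ENNReal.ofReal_mul (Real.rpow_nonneg h4ρ.le _)]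
    _ = ∫⁻ _t in Ico (3 * ρ) (4 * ρ), ENNReal.ofReal ((4 * ρ) ^ (-(1 + θ))) := by
        rw [setLIntegral_const]
    _ ≤ ∫⁻ t in Ico (3 * ρ) (4 * ρ), ENNReal.ofReal (t ^ (-(1 + θ))) :=
        setLIntegral_mono_on3 measurableSet_Ico hstep

theorem weight_int_upper3 {θ : ℝ} (hθ0 : 0 ≤ θ) (hθ1 : θ ≤ 1) {ρ : ℝ} (hρ : 0 < ρ) :
    ∫⁻ t in Ioc (ρ / 2) ρ, ENNReal.ofReal (t ^ (-(1 + θ))) ≤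
      ENNReal.ofReal (4 * (9 / 8 * ρ) ^ (-θ)) := by
  have hρ2 : (0:ℝ) < ρ / 2 := by linarith
  calc ∫⁻ t in Ioc (ρ / 2) ρ, ENNReal.ofReal (t ^ (-(1 + θ)))
      ≤ ∫⁻ _t in Ioc (ρ / 2) ρ, ENNReal.ofReal ((ρ / 2) ^ (-(1 + θ))) := by
        refine setLIntegral_mono_on3 measurableSet_Ioc ?_
        intro t ht
        exact ENNReal.ofReal_le_ofReal
          (Real.rpow_le_rpow_of_nonpos hρ2 (le_of_lt ht.1) (by linarith))
    _ = ENNReal.ofReal ((ρ / 2) ^ (-(1 + θ)) * (ρ / 2)) := by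
        rw [setLIntegral_const, Real.volume_Ioc, show ρ - ρ / 2 = ρ / 2 by ring,
          ← ENNReal.ofReal_mul (Real.rpow_nonneg hρ2.le _)]
    _ ≤ ENNReal.ofReal (4 * (9 / 8 * ρ) ^ (-θ)) := by
        refine ENNReal.ofReal_le_ofReal ?_
        have e1 : (ρ / 2) ^ (-(1 + θ)) = (ρ / 2)⁻¹ * (ρ / 2) ^ (-θ) := by
          rw [show -(1 + θ) = (-1) + (-θ) by ring, Real.rpow_add hρ2, Real.rpow_neg_one]
        have e2 : (ρ / 2 : ℝ) ^ (-θ) = ρ ^ (-θ) * (1/2 : ℝ) ^ (-θ) := by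
          rw [show (ρ / 2 : ℝ) = ρ * (1/2) by ring]
          exact Real.mul_rpow hρ.le (by norm_num)
        have e3 : (9 / 8 * ρ : ℝ) ^ (-θ) = (9/8:ℝ) ^ (-θ) * ρ ^ (-θ) :=
          Real.mul_rpow (by norm_num) hρ.le
        have h12 : (1/2:ℝ) ^ (-θ) ≤ 2 := by
          have he : (1/2:ℝ) ^ (-θ) = (2:ℝ) ^ θ := by
            rw [show (1/2:ℝ) = 2⁻¹ by norm_num, ← Real.rpow_neg_one 2,
              ← Real.rpow_mul (by norm_num : (0:ℝ) ≤ 2)]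
            norm_num
          have hb : (2:ℝ) ^ θ ≤ (2:ℝ) ^ (1:ℝ) :=
            (Real.rpow_le_rpow_left_iff (by norm_num)).mpr hθ1
          rw [Real.rpow_one] at hb
          linarith [he ▸ hb]
        have h98 : (8/9 : ℝ) ≤ (9/8:ℝ) ^ (-θ) := by
          have : (9/8:ℝ) ^ (-1:ℝ) ≤ (9/8:ℝ) ^ (-θ) :=
            (Real.rpow_le_rpow_left_iff (by norm_num)).mpr (by linarith)
          rwa [Real.rpow_neg_one, show ((9:ℝ)/8)⁻¹ = 8/9 by norm_num] at this
        have hρθ : (0:ℝ) < ρ ^ (-θ) := Real.rpow_pos_of_pos hρ _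
        rw [e1, e2, e3]
        have haρ : (ρ/2)⁻¹ * (ρ/2) = 1 := by field_simp
        have key : (ρ/2)⁻¹ * (ρ ^ (-θ) * (1/2:ℝ) ^ (-θ)) * (ρ/2)
              = ρ ^ (-θ) * ((1/2:ℝ) ^ (-θ)) * ((ρ/2)⁻¹ * (ρ/2)) := by ring
        rw [key, haρ]
        have p1 := mul_le_mul_of_nonneg_left h12 hρθ.le
        have p2 := mul_le_mul_of_nonneg_right h98 hρθ.le
        nlinarith



theorem lower_scale'
    {Z : Type*} [MetricSpace Z] [MeasurableSpace Z] [BorelSpace Z]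
    (ν : Measure Z) (C_D : ℝ) (hCD : 1 ≤ C_D)
    (hdbl : ∀ (z : Z) (r : ℝ), 0 < r →
      ν (ball z (2 * r)) ≤ ENNReal.ofReal C_D * ν (ball z r) ∧
        0 < ν (ball z r) ∧ ν (ball z r) < ⊤)
    (θ : ℝ) (hθ0 : 0 ≤ θ) (hθ1 : θ ≤ 1) (f : Z → ℝ)
    (ρ : ℝ) (hρ : 0 < ρ)
    (𝓑 : Set (Z × ℝ)) (h𝓑c : 𝓑.Countable)
    (hrad : ∀ b ∈ 𝓑, b.2 = 9 / 8 * ρ)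
    (hcov : ∀ x : Z, ∃ b ∈ 𝓑, dist x b.1 < ρ / 8) :
    ∫⁻ t in Ioc (ρ / 2) ρ,
        (∫⁻ x, (ν (ball x t))⁻¹ * ∫⁻ y in ball x t, ENNReal.ofReal |f y - f x| ∂ν ∂ν) *
          ENNReal.ofReal (t ^ (-(1 + θ))) ≤
      8 * (ENNReal.ofReal C_D) ^ 2 *
        ∑' (b : 𝓑), ENNReal.ofReal ((b : Z × ℝ).2 ^ (-θ)) *
          ∫⁻ y in ball (b : Z × ℝ).1 (b : Z × ℝ).2,
            ENNReal.ofReal |f y - ⨍ w in ball (b : Z × ℝ).1 (b : Z × ℝ).2, f w ∂ν| ∂ν := by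
  classical
  set D := ENNReal.ofReal C_D with hD
  have hD1 : (1 : ℝ≥0∞) ≤ D := ENNReal.one_le_ofReal.mpr hCD
  haveI : Countable ↥𝓑 := h𝓑c.to_subtype
  obtain ⟨ι, hι⟩ := Set.countable_iff_exists_injective.mp h𝓑c
  set fB : Z × ℝ → ℝ := fun b => ⨍ w in ball b.1 b.2, f w ∂ν with hfB
  set Ab : Z × ℝ → ℝ≥0∞ :=
    fun b => ∫⁻ y in ball b.1 b.2, ENNReal.ofReal |f y - fB b| ∂ν with hAb
  set E : Z → ℝ → ℝ≥0∞ :=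
    fun x t => (ν (ball x t))⁻¹ * ∫⁻ y in ball x t, ENNReal.ofReal |f y - f x| ∂ν with hE
  set U : ↥𝓑 → Set Z := fun b =>
    ball b.val.1 (ρ / 8) \ ⋃ (b' : ↥𝓑) (_ : ι b' < ι b), ball b'.val.1 (ρ / 8) with hU
  have hUmeas : ∀ b, MeasurableSet (U b) := fun b =>
    measurableSet_ball.diff
      (MeasurableSet.iUnion fun b' => MeasurableSet.iUnion fun _ => measurableSet_ball)
  have hUuniv : ⋃ b, U b = univ := by
    refine eq_univ_of_forall fun x => ?_
    have hex : ∃ n, ∃ b : ↥𝓑, ι b = n ∧ x ∈ ball b.val.1 (ρ / 8) := by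
      obtain ⟨b, hb𝓑, hbd⟩ := hcov x
      exact ⟨ι ⟨b, hb𝓑⟩, ⟨b, hb𝓑⟩, rfl, mem_ball.mpr hbd⟩
    obtain ⟨b₀, hbι, hbx⟩ := Nat.find_spec hex
    refine mem_iUnion.mpr ⟨b₀, hbx, ?_⟩
    intro hmem
    rw [mem_iUnion] at hmem
    obtain ⟨b', hb'⟩ := hmem
    rw [mem_iUnion] at hb'
    obtain ⟨hlt, hxb'⟩ := hb'
    exact Nat.find_min hex (hbι ▸ hlt) ⟨b', rfl, hxb'⟩
  have key : ∀ t ∈ Ioc (ρ / 2) ρ,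
      (∫⁻ x, E x t ∂ν) ≤ (D ^ 2 + 1) * ∑' b : ↥𝓑, Ab b.val := by
    intro t ht
    have ht0 : 0 < t := lt_trans (by positivity) ht.1
    have hpt : ∀ b : ↥𝓑, ∀ x ∈ U b,
        E x t ≤ D ^ 2 * (ν (ball b.val.1 (9 / 8 * ρ)))⁻¹ * Ab b.val +
          ENNReal.ofReal |f x - fB b.val| := by
      intro b x hxU
      have hxball : x ∈ ball b.val.1 (ρ / 8) := hxU.1
      have hrad2 : b.val.2 = 9 / 8 * ρ := hrad b.val b.prop
      have hdxz : dist x b.val.1 < ρ / 8 := mem_ball.mp hxball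
      have hsub1 : ball x t ⊆ ball b.val.1 (9 / 8 * ρ) := by
        intro y hy
        have hy' := mem_ball.mp hy
        rw [mem_ball]
        calc dist y b.val.1 ≤ dist y x + dist x b.val.1 := dist_triangle _ _ _
          _ < t + ρ / 8 := by linarith
          _ ≤ 9 / 8 * ρ := by linarith [ht.2]
      have hsub2 : ball b.val.1 (9 / 8 * ρ) ⊆ ball x (2 ^ 2 * t) := by
        intro y hy
        have hy' := mem_ball.mp hy
        have h2 : dist b.val.1 x < ρ / 8 := by rw [dist_comm]; exact hdxz
        rw [mem_ball]
        calc dist y x ≤ dist y b.val.1 + dist b.val.1 x := dist_triangle _ _ _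
          _ < 9 / 8 * ρ + ρ / 8 := by linarith
          _ ≤ 2 ^ 2 * t := by
              have := ht.1
              norm_num
              linarith
      have hinv : (ν (ball x t))⁻¹ ≤ D ^ 2 * (ν (ball b.val.1 (9 / 8 * ρ)))⁻¹ :=
        inv_cmp3 ν C_D hCD hdbl (by positivity) ht0 2 hsub2
      have hpos := (hdbl x t ht0).2
      have step1 : ∀ y : Z, ENNReal.ofReal |f y - f x| ≤
          ENNReal.ofReal |f y - fB b.val| + ENNReal.ofReal |f x - fB b.val| := by
        intro y
        rw [← ENNReal.ofReal_add (abs_nonneg _) (abs_nonneg _)]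
        refine ENNReal.ofReal_le_ofReal ?_
        calc |f y - f x| ≤ |f y - fB b.val| + |fB b.val - f x| := abs_sub_le _ _ _
          _ = |f y - fB b.val| + |f x - fB b.val| := by rw [abs_sub_comm (fB b.val)]
      have step2 : ∫⁻ y in ball x t, ENNReal.ofReal |f y - f x| ∂ν ≤
          (∫⁻ y in ball x t, ENNReal.ofReal |f y - fB b.val| ∂ν) +
            ENNReal.ofReal |f x - fB b.val| * ν (ball x t) := by
        calc ∫⁻ y in ball x t, ENNReal.ofReal |f y - f x| ∂ν
            ≤ ∫⁻ y in ball x t,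
                (ENNReal.ofReal |f y - fB b.val| + ENNReal.ofReal |f x - fB b.val|) ∂ν :=
              lintegral_mono fun y => step1 y
          _ = _ := by
              rw [lintegral_add_right _ measurable_const, setLIntegral_const]
      have step3 : ∫⁻ y in ball x t, ENNReal.ofReal |f y - fB b.val| ∂ν ≤ Ab b.val := by
        have hab : Ab b.val =
            ∫⁻ y in ball b.val.1 b.val.2, ENNReal.ofReal |f y - fB b.val| ∂ν := rfl
        rw [hab, hrad2]
        exact lintegral_mono' (Measure.restrict_mono hsub1 le_rfl) le_rfl
      calc E x t ≤ (ν (ball x t))⁻¹ *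
            ((∫⁻ y in ball x t, ENNReal.ofReal |f y - fB b.val| ∂ν) +
              ENNReal.ofReal |f x - fB b.val| * ν (ball x t)) := mul_le_mul_right step2 _
        _ = (ν (ball x t))⁻¹ * (∫⁻ y in ball x t, ENNReal.ofReal |f y - fB b.val| ∂ν) +
            (ν (ball x t))⁻¹ * (ENNReal.ofReal |f x - fB b.val| * ν (ball x t)) :=
            mul_add _ _ _
        _ ≤ D ^ 2 * (ν (ball b.val.1 (9 / 8 * ρ)))⁻¹ * Ab b.val +
            ENNReal.ofReal |f x - fB b.val| := by
            refine add_le_add ?_ ?_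
            · exact mul_le_mul' hinv step3
            · rw [mul_comm (ENNReal.ofReal _) (ν (ball x t)), ← mul_assoc,
                ENNReal.inv_mul_cancel hpos.1.ne' hpos.2.ne, one_mul]
    have hUb : ∀ b : ↥𝓑, ∫⁻ x in U b, E x t ∂ν ≤ (D ^ 2 + 1) * Ab b.val := by
      intro b
      have hrad2 : b.val.2 = 9 / 8 * ρ := hrad b.val b.prop
      have hBpos := hdbl b.val.1 (9 / 8 * ρ) (by positivity)
      have hUsub : U b ⊆ ball b.val.1 (9 / 8 * ρ) :=
        subset_trans diff_subset (ball_subset_ball (by linarith))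
      have habeq : Ab b.val =
          ∫⁻ y in ball b.val.1 (9 / 8 * ρ), ENNReal.ofReal |f y - fB b.val| ∂ν := by
        have hab : Ab b.val =
            ∫⁻ y in ball b.val.1 b.val.2, ENNReal.ofReal |f y - fB b.val| ∂ν := rfl
        rw [hab, hrad2]
      calc ∫⁻ x in U b, E x t ∂ν
          ≤ ∫⁻ x in U b, (D ^ 2 * (ν (ball b.val.1 (9 / 8 * ρ)))⁻¹ * Ab b.val +
              ENNReal.ofReal |f x - fB b.val|) ∂ν :=
            setLIntegral_mono_on3 (hUmeas b) (hpt b)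
        _ = D ^ 2 * (ν (ball b.val.1 (9 / 8 * ρ)))⁻¹ * Ab b.val * ν (U b) +
            ∫⁻ x in U b, ENNReal.ofReal |f x - fB b.val| ∂ν := by
            rw [lintegral_add_left measurable_const, setLIntegral_const]
        _ ≤ D ^ 2 * (ν (ball b.val.1 (9 / 8 * ρ)))⁻¹ * Ab b.val *
              ν (ball b.val.1 (9 / 8 * ρ)) + Ab b.val := by
            refine add_le_add (mul_le_mul_right (measure_mono hUsub) _) ?_
            rw [habeq]
            exact lintegral_mono' (Measure.restrict_mono hUsub le_rfl) le_rfl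
        _ = (D ^ 2 + 1) * Ab b.val := by
            have hcancel :
                (ν (ball b.val.1 (9 / 8 * ρ)))⁻¹ * ν (ball b.val.1 (9 / 8 * ρ)) = 1 :=
              ENNReal.inv_mul_cancel hBpos.2.1.ne' hBpos.2.2.ne
            calc D ^ 2 * (ν (ball b.val.1 (9 / 8 * ρ)))⁻¹ * Ab b.val *
                ν (ball b.val.1 (9 / 8 * ρ)) + Ab b.val
                = D ^ 2 * Ab b.val * ((ν (ball b.val.1 (9 / 8 * ρ)))⁻¹ *
                    ν (ball b.val.1 (9 / 8 * ρ))) + Ab b.val := by ring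
              _ = D ^ 2 * Ab b.val + Ab b.val := by rw [hcancel, mul_one]
              _ = (D ^ 2 + 1) * Ab b.val := by ring
    calc ∫⁻ x, E x t ∂ν = ∫⁻ x in ⋃ b, U b, E x t ∂ν := by
          rw [hUuniv, Measure.restrict_univ]
      _ ≤ ∑' (b : ↥𝓑), ∫⁻ x in U b, E x t ∂ν := lintegral_iUnion_le _ _
      _ ≤ ∑' (b : ↥𝓑), (D ^ 2 + 1) * Ab b.val := ENNReal.tsum_le_tsum hUb
      _ = (D ^ 2 + 1) * ∑' (b : ↥𝓑), Ab b.val := ENNReal.tsum_mul_left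
  have hwm : Measurable fun t : ℝ => ENNReal.ofReal (t ^ (-(1 + θ))) :=
    (measurable_id.pow measurable_const).ennreal_ofReal
  calc ∫⁻ t in Ioc (ρ / 2) ρ, (∫⁻ x, E x t ∂ν) * ENNReal.ofReal (t ^ (-(1 + θ)))
      ≤ ∫⁻ t in Ioc (ρ / 2) ρ,
          ((D ^ 2 + 1) * ∑' b : ↥𝓑, Ab b.val) * ENNReal.ofReal (t ^ (-(1 + θ))) :=
        setLIntegral_mono_on3 measurableSet_Ioc fun t ht =>
          mul_le_mul_left (key t ht) _
    _ = ((D ^ 2 + 1) * ∑' b : ↥𝓑, Ab b.val) *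
          ∫⁻ t in Ioc (ρ / 2) ρ, ENNReal.ofReal (t ^ (-(1 + θ))) :=
        lintegral_const_mul _ hwm
    _ ≤ ((D ^ 2 + 1) * ∑' b : ↥𝓑, Ab b.val) * ENNReal.ofReal (4 * (9 / 8 * ρ) ^ (-θ)) :=
        mul_le_mul_right (weight_int_upper3 hθ0 hθ1 hρ) _
    _ ≤ 8 * D ^ 2 * ∑' (b : ↥𝓑), ENNReal.ofReal ((b.val.2 : ℝ) ^ (-θ)) * Ab b.val := by
        have hterm : ∀ b : ↥𝓑, ENNReal.ofReal ((b.val.2 : ℝ) ^ (-θ)) * Ab b.val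
            = ENNReal.ofReal ((9 / 8 * ρ) ^ (-θ)) * Ab b.val := by
          intro b; rw [hrad b.val b.prop]
        rw [tsum_congr hterm, ENNReal.tsum_mul_left]
        rw [ENNReal.ofReal_mul (by norm_num : (0:ℝ) ≤ 4)]
        have h4 : ENNReal.ofReal (4 : ℝ) = 4 := by
          rw [show ((4:ℝ)) = ((4:ℕ):ℝ) by norm_num, ENNReal.ofReal_natCast]
          norm_num
        rw [h4]
        have h2 : (1 : ℝ≥0∞) ≤ D ^ 2 := by
          calc (1 : ℝ≥0∞) = 1 ^ 2 := by norm_num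
            _ ≤ D ^ 2 := pow_le_pow_left' hD1 2
        calc ((D ^ 2 + 1) * ∑' b : ↥𝓑, Ab b.val) *
              (4 * ENNReal.ofReal ((9 / 8 * ρ) ^ (-θ)))
            = ((D ^ 2 + 1) * 4) * (ENNReal.ofReal ((9 / 8 * ρ) ^ (-θ)) *
                ∑' b : ↥𝓑, Ab b.val) := by ring
          _ ≤ (8 * D ^ 2) * (ENNReal.ofReal ((9 / 8 * ρ) ^ (-θ)) *
                ∑' b : ↥𝓑, Ab b.val) := by
              refine mul_le_mul_left ?_ _
              calc (D ^ 2 + 1) * 4 ≤ (D ^ 2 + D ^ 2) * 4 :=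
                    mul_le_mul_left (add_le_add le_rfl h2) _
                _ = 8 * D ^ 2 := by ring
          _ = 8 * D ^ 2 * (ENNReal.ofReal ((9 / 8 * ρ) ^ (-θ)) *
                ∑' b : ↥𝓑, Ab b.val) := by ring
    _ = 8 * D ^ 2 *
        ∑' (b : 𝓑), ENNReal.ofReal ((b : Z × ℝ).2 ^ (-θ)) *
          ∫⁻ y in ball (b : Z × ℝ).1 (b : Z × ℝ).2,
            ENNReal.ofReal |f y - ⨍ w in ball (b : Z × ℝ).1 (b : Z × ℝ).2, f w ∂ν| ∂ν := by
        simp only [hAb, hfB]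

theorem upper_scale'
    {Z : Type*} [MetricSpace Z] [MeasurableSpace Z] [BorelSpace Z]
    (ν : Measure Z) (C_D : ℝ) (hCD : 1 ≤ C_D)
    (hdbl : ∀ (z : Z) (r : ℝ), 0 < r →
      ν (ball z (2 * r)) ≤ ENNReal.ofReal C_D * ν (ball z r) ∧
        0 < ν (ball z r) ∧ ν (ball z r) < ⊤)
    (θ : ℝ) (hθ0 : 0 ≤ θ) (hθ1 : θ ≤ 1) (f : Z → ℝ) (hf : Integrable f ν)
    (ρ : ℝ) (hρ : 0 < ρ)
    (𝓑 : Set (Z × ℝ)) (h𝓑c : 𝓑.Countable)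
    (hrad : ∀ b ∈ 𝓑, b.2 = 9 / 8 * ρ)
    (Nn : ℕ)
    (hover : ∀ x : Z, {b ∈ 𝓑 | x ∈ ball b.1 b.2}.Finite ∧
      {b ∈ 𝓑 | x ∈ ball b.1 b.2}.ncard ≤ Nn) :
    ∑' (b : 𝓑), ENNReal.ofReal ((b : Z × ℝ).2 ^ (-θ)) *
        ∫⁻ y in ball (b : Z × ℝ).1 (b : Z × ℝ).2,
          ENNReal.ofReal |f y - ⨍ w in ball (b : Z × ℝ).1 (b : Z × ℝ).2, f w ∂ν| ∂ν ≤
      16 * (ENNReal.ofReal C_D) ^ 3 * Nn *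
        ∫⁻ t in Ico (3 * ρ) (4 * ρ),
          (∫⁻ x, (ν (ball x t))⁻¹ * ∫⁻ y in ball x t, ENNReal.ofReal |f y - f x| ∂ν ∂ν) *
            ENNReal.ofReal (t ^ (-(1 + θ))) := by
  classical
  set D := ENNReal.ofReal C_D with hD
  have hD1 : (1 : ℝ≥0∞) ≤ D := ENNReal.one_le_ofReal.mpr hCD
  have hDt : D ^ 3 ≠ ⊤ := by
    rw [hD]; exact ENNReal.pow_ne_top ENNReal.ofReal_ne_top
  haveI : Countable ↥𝓑 := h𝓑c.to_subtype
  set fB : Z × ℝ → ℝ := fun b => ⨍ w in ball b.1 b.2, f w ∂ν with hfB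
  set Ab : Z × ℝ → ℝ≥0∞ :=
    fun b => ∫⁻ y in ball b.1 b.2, ENNReal.ofReal |f y - fB b| ∂ν with hAb
  set E : Z → ℝ → ℝ≥0∞ :=
    fun x t => (ν (ball x t))⁻¹ * ∫⁻ y in ball x t, ENNReal.ofReal |f y - f x| ∂ν with hE
  have hwm : Measurable fun t : ℝ => ENNReal.ofReal (t ^ (-(1 + θ))) :=
    (measurable_id.pow measurable_const).ennreal_ofReal
  have hover' : ∀ x : Z, ∀ F : Finset ↥𝓑,
      (F.filter (fun b : ↥𝓑 => x ∈ ball b.val.1 b.val.2)).card ≤ Nn := by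
    intro x F
    obtain ⟨hWfin, hWcard⟩ := hover x
    have hsub : Subtype.val '' ((F.filter (fun b : ↥𝓑 => x ∈ ball b.val.1 b.val.2) : Finset ↥𝓑) : Set ↥𝓑) ⊆
        {b ∈ 𝓑 | x ∈ ball b.1 b.2} := by
      rintro _ ⟨b, hb, rfl⟩
      simp only [Finset.coe_filter, mem_setOf_eq] at hb
      exact ⟨b.prop, hb.2⟩
    calc (F.filter (fun b : ↥𝓑 => x ∈ ball b.val.1 b.val.2)).card
        = (Subtype.val '' ((F.filter (fun b : ↥𝓑 => x ∈ ball b.val.1 b.val.2) : Finset ↥𝓑) : Set ↥𝓑)).ncard := by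
          rw [Set.ncard_image_of_injective _ Subtype.val_injective, Set.ncard_coe_finset]
      _ ≤ {b ∈ 𝓑 | x ∈ ball b.1 b.2}.ncard := Set.ncard_le_ncard hsub hWfin
      _ ≤ Nn := hWcard
  -- per-ball estimate
  have hb_step : ∀ b : ↥𝓑, ENNReal.ofReal ((b.val.2 : ℝ) ^ (-θ)) * Ab b.val ≤
      16 * D ^ 3 * ∫⁻ t in Ico (3 * ρ) (4 * ρ),
        (∫⁻ x in ball b.val.1 b.val.2, E x t ∂ν) * ENNReal.ofReal (t ^ (-(1 + θ))) := by
    intro b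
    have hrad2 : b.val.2 = 9 / 8 * ρ := hrad b.val b.prop
    have hB := hdbl b.val.1 (9 / 8 * ρ) (by positivity)
    have habeq : Ab b.val =
        ∫⁻ y in ball b.val.1 (9 / 8 * ρ), ENNReal.ofReal |f y - fB b.val| ∂ν := by
      have hab : Ab b.val =
          ∫⁻ y in ball b.val.1 b.val.2, ENNReal.ofReal |f y - fB b.val| ∂ν := rfl
      rw [hab, hrad2]
    have hballeq : ball b.val.1 b.val.2 = ball b.val.1 (9 / 8 * ρ) := by rw [hrad2]
    have stepA : ∀ t ∈ Ico (3 * ρ) (4 * ρ), ∀ x ∈ ball b.val.1 (9 / 8 * ρ),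
        ENNReal.ofReal |f x - fB b.val| ≤ D ^ 3 * E x t := by
      intro t ht x hx
      have ht0 : 0 < t := lt_of_lt_of_le (by positivity) ht.1
      have hdzx : dist x b.val.1 < 9 / 8 * ρ := mem_ball.mp hx
      have hsubB : ball b.val.1 (9 / 8 * ρ) ⊆ ball x t := by
        intro y hy
        have hy' := mem_ball.mp hy
        have h2 : dist b.val.1 x < 9 / 8 * ρ := by rw [dist_comm]; exact hdzx
        rw [mem_ball]
        calc dist y x ≤ dist y b.val.1 + dist b.val.1 x := dist_triangle _ _ _
          _ < 9 / 8 * ρ + 9 / 8 * ρ := by linarith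
          _ ≤ t := by linarith [ht.1]
      have hsubB2 : ball x t ⊆ ball b.val.1 (2 ^ 3 * (9 / 8 * ρ)) := by
        intro y hy
        have hy' := mem_ball.mp hy
        rw [mem_ball]
        calc dist y b.val.1 ≤ dist y x + dist x b.val.1 := dist_triangle _ _ _
          _ < t + 9 / 8 * ρ := by linarith
          _ ≤ 2 ^ 3 * (9 / 8 * ρ) := by norm_num; linarith [ht.2]
      have hinv : (ν (ball b.val.1 (9 / 8 * ρ)))⁻¹ ≤ D ^ 3 * (ν (ball x t))⁻¹ :=
        inv_cmp3 ν C_D hCD hdbl ht0 (by positivity) 3 hsubB2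
      have havg := avg_diff_le3 hf b.val.1 (9 / 8 * ρ) hB.2.1.ne' hB.2.2.ne x
      have hfBeq : fB b.val = ⨍ w in ball b.val.1 (9 / 8 * ρ), f w ∂ν := by
        have : fB b.val = ⨍ w in ball b.val.1 b.val.2, f w ∂ν := rfl
        rw [this, hrad2]
      calc ENNReal.ofReal |f x - fB b.val|
          ≤ (ν (ball b.val.1 (9 / 8 * ρ)))⁻¹ *
              ∫⁻ y in ball b.val.1 (9 / 8 * ρ), ENNReal.ofReal |f x - f y| ∂ν := by
            rw [hfBeq]; exact havg
        _ ≤ (D ^ 3 * (ν (ball x t))⁻¹) *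
              ∫⁻ y in ball x t, ENNReal.ofReal |f x - f y| ∂ν :=
            mul_le_mul' hinv (lintegral_mono' (Measure.restrict_mono hsubB le_rfl) le_rfl)
        _ = D ^ 3 * E x t := by
            rw [mul_assoc]
            congr 1
            congr 1
            exact lintegral_congr fun y => by rw [abs_sub_comm]
    have stepB : ∀ t ∈ Ico (3 * ρ) (4 * ρ),
        Ab b.val ≤ D ^ 3 * ∫⁻ x in ball b.val.1 b.val.2, E x t ∂ν := by
      intro t ht
      calc Ab b.val
          = ∫⁻ x in ball b.val.1 (9 / 8 * ρ), ENNReal.ofReal |f x - fB b.val| ∂ν := habeq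
        _ ≤ ∫⁻ x in ball b.val.1 (9 / 8 * ρ), D ^ 3 * E x t ∂ν :=
            setLIntegral_mono_on3 measurableSet_ball (stepA t ht)
        _ = D ^ 3 * ∫⁻ x in ball b.val.1 (9 / 8 * ρ), E x t ∂ν :=
            lintegral_const_mul' _ _ hDt
        _ = D ^ 3 * ∫⁻ x in ball b.val.1 b.val.2, E x t ∂ν := by rw [hballeq]
    have hw : ENNReal.ofReal ((b.val.2 : ℝ) ^ (-θ)) ≤
        16 * ∫⁻ t in Ico (3 * ρ) (4 * ρ), ENNReal.ofReal (t ^ (-(1 + θ))) := by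
      rw [hrad2]
      calc ENNReal.ofReal ((9 / 8 * ρ) ^ (-θ))
          = 16 * ENNReal.ofReal ((9 / 8 * ρ) ^ (-θ) / 16) := by
            have h16 : (16 : ℝ≥0∞) = ENNReal.ofReal (16:ℝ) := by
              rw [show ((16:ℝ)) = ((16:ℕ):ℝ) by norm_num, ENNReal.ofReal_natCast]
              norm_num
            rw [h16, ← ENNReal.ofReal_mul (by norm_num : (0:ℝ) ≤ 16)]
            congr 1
            ring
        _ ≤ 16 * ∫⁻ t in Ico (3 * ρ) (4 * ρ), ENNReal.ofReal (t ^ (-(1 + θ))) :=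
            mul_le_mul_right (weight_int_lower3 hθ0 hθ1 hρ) _
    calc ENNReal.ofReal ((b.val.2 : ℝ) ^ (-θ)) * Ab b.val
        ≤ (16 * ∫⁻ t in Ico (3 * ρ) (4 * ρ), ENNReal.ofReal (t ^ (-(1 + θ)))) * Ab b.val :=
          mul_le_mul_left hw _
      _ = 16 * ∫⁻ t in Ico (3 * ρ) (4 * ρ), ENNReal.ofReal (t ^ (-(1 + θ))) * Ab b.val := by
          rw [mul_assoc]
          congr 1
          exact (lintegral_mul_const'' _ hwm.aemeasurable).symm
      _ ≤ 16 * ∫⁻ t in Ico (3 * ρ) (4 * ρ),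
            (D ^ 3 * ∫⁻ x in ball b.val.1 b.val.2, E x t ∂ν) *
              ENNReal.ofReal (t ^ (-(1 + θ))) := by
          refine mul_le_mul_right (setLIntegral_mono_on3 measurableSet_Ico fun t ht => ?_) _
          rw [mul_comm (ENNReal.ofReal (t ^ (-(1 + θ))))]
          exact mul_le_mul_left (stepB t ht) _
      _ = 16 * D ^ 3 * ∫⁻ t in Ico (3 * ρ) (4 * ρ),
            (∫⁻ x in ball b.val.1 b.val.2, E x t ∂ν) * ENNReal.ofReal (t ^ (-(1 + θ))) := by
          rw [mul_assoc 16]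
          congr 1
          rw [← lintegral_const_mul' (D ^ 3) _ hDt]
          exact lintegral_congr fun t => by ring
  -- overlap: pointwise sum bound
  have hptover : ∀ t : ℝ,
      ∑' (b : ↥𝓑), ∫⁻ x in ball b.val.1 b.val.2, E x t ∂ν ≤
        (Nn : ℝ≥0∞) * ∫⁻ x, E x t ∂ν := by
    intro t
    have h1 : ∀ b : ↥𝓑, ∫⁻ x in ball b.val.1 b.val.2, E x t ∂ν =
        ∫⁻ x, (ball b.val.1 b.val.2).indicator (fun x => E x t) x ∂ν := fun b =>
      (lintegral_indicator measurableSet_ball _).symm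
    calc ∑' (b : ↥𝓑), ∫⁻ x in ball b.val.1 b.val.2, E x t ∂ν
        = ∑' (b : ↥𝓑), ∫⁻ x, (ball b.val.1 b.val.2).indicator (fun x => E x t) x ∂ν :=
          tsum_congr h1
      _ ≤ ∫⁻ x, ∑' (b : ↥𝓑), (ball b.val.1 b.val.2).indicator (fun x => E x t) x ∂ν :=
          tsum_lintegral_le3 ν _
      _ ≤ ∫⁻ x, (Nn : ℝ≥0∞) * E x t ∂ν := by
          refine lintegral_mono fun x => ?_
          rw [ENNReal.tsum_eq_iSup_sum]
          refine iSup_le fun F => ?_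
          calc ∑ b ∈ F, (ball b.val.1 b.val.2).indicator (fun x => E x t) x
              = ∑ b ∈ F.filter (fun b => x ∈ ball b.val.1 b.val.2), E x t := by
                rw [Finset.sum_filter]
                refine Finset.sum_congr rfl fun b _ => ?_
                simp [Set.indicator_apply]
            _ = ((F.filter (fun b => x ∈ ball b.val.1 b.val.2)).card : ℝ≥0∞) * E x t := by
                rw [Finset.sum_const, nsmul_eq_mul]
            _ ≤ (Nn : ℝ≥0∞) * E x t := by
                refine mul_le_mul_left ?_ _
                exact_mod_cast Nat.cast_le.mpr (hover' x F)
      _ = (Nn : ℝ≥0∞) * ∫⁻ x, E x t ∂ν := lintegral_const_mul' _ _ (natCast_ne_top Nn)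
  -- assemble
  calc ∑' (b : 𝓑), ENNReal.ofReal ((b : Z × ℝ).2 ^ (-θ)) *
        ∫⁻ y in ball (b : Z × ℝ).1 (b : Z × ℝ).2,
          ENNReal.ofReal |f y - ⨍ w in ball (b : Z × ℝ).1 (b : Z × ℝ).2, f w ∂ν| ∂ν
      = ∑' (b : ↥𝓑), ENNReal.ofReal ((b.val.2 : ℝ) ^ (-θ)) * Ab b.val := by
        simp only [hAb, hfB]
    _ ≤ ∑' (b : ↥𝓑), 16 * D ^ 3 * ∫⁻ t in Ico (3 * ρ) (4 * ρ),
          (∫⁻ x in ball b.val.1 b.val.2, E x t ∂ν) * ENNReal.ofReal (t ^ (-(1 + θ))) :=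
        ENNReal.tsum_le_tsum hb_step
    _ = 16 * D ^ 3 * ∑' (b : ↥𝓑), ∫⁻ t in Ico (3 * ρ) (4 * ρ),
          (∫⁻ x in ball b.val.1 b.val.2, E x t ∂ν) * ENNReal.ofReal (t ^ (-(1 + θ))) :=
        ENNReal.tsum_mul_left
    _ ≤ 16 * D ^ 3 * ∫⁻ t in Ico (3 * ρ) (4 * ρ),
          ∑' (b : ↥𝓑), (∫⁻ x in ball b.val.1 b.val.2, E x t ∂ν) *
            ENNReal.ofReal (t ^ (-(1 + θ))) ∂volume :=
        mul_le_mul_right (tsum_lintegral_le3 _ _) _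
    _ ≤ 16 * D ^ 3 * ∫⁻ t in Ico (3 * ρ) (4 * ρ),
          ((Nn : ℝ≥0∞) * ∫⁻ x, E x t ∂ν) * ENNReal.ofReal (t ^ (-(1 + θ))) ∂volume := by
        refine mul_le_mul_right (setLIntegral_mono_on3 measurableSet_Ico fun t _ => ?_) _
        rw [ENNReal.tsum_mul_right]
        exact mul_le_mul_left (hptover t) _
    _ = 16 * D ^ 3 * Nn * ∫⁻ t in Ico (3 * ρ) (4 * ρ),
          (∫⁻ x, E x t ∂ν) * ENNReal.ofReal (t ^ (-(1 + θ))) := by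
        rw [mul_assoc (16 * D ^ 3)]
        congr 1
        rw [← lintegral_const_mul' (Nn : ℝ≥0∞) _ (natCast_ne_top Nn)]
        exact lintegral_congr fun t => by ring

/-- Characterization of the Besov energy via sums over collections of
balls of dyadic radii (balls are recorded as center-radius pairs `b = (b.1, b.2)`):
there are countable collections `𝓑 k` of balls of radius comparable to `2^{-k}`, with
uniformly bounded overlap even after inflating each ball by the factor `τ`, such that
`C⁻¹ I_θ(f,1) ≤ Σ_k Σ_{B ∈ 𝓑 k} rad(B)^{−θ} ∫_B |f − f_B| dν ≤ C I_θ(f,4)`. -/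
theorem stmt_4
    {Z : Type*} [MetricSpace Z] [MeasurableSpace Z] [BorelSpace Z]
    (ν : Measure Z) [ν.Regular]
    (C_D : ℝ) (hCD : 1 ≤ C_D)
    (hdbl : ∀ (z : Z) (r : ℝ), 0 < r →
      ν (ball z (2 * r)) ≤ ENNReal.ofReal C_D * ν (ball z r) ∧
        0 < ν (ball z r) ∧ ν (ball z r) < ⊤)
    (θ : ℝ) (hθ0 : 0 ≤ θ) (hθ1 : θ ≤ 1) (τ : ℝ) (hτ : 1 ≤ τ) :
    ∃ (C : ℕ) (𝓑 : ℕ → Set (Z × ℝ)), 1 ≤ C ∧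
      (∀ k, (𝓑 k).Countable) ∧
      (∀ k, ∀ b ∈ 𝓑 k, ((C : ℝ))⁻¹ * (2 : ℝ) ^ (-(k : ℤ)) ≤ b.2 ∧
        b.2 ≤ (C : ℝ) * (2 : ℝ) ^ (-(k : ℤ))) ∧
      (∀ (k : ℕ) (z : Z), {b ∈ 𝓑 k | z ∈ ball b.1 (τ * b.2)}.Finite ∧
        {b ∈ 𝓑 k | z ∈ ball b.1 (τ * b.2)}.ncard ≤ C) ∧
      ∀ f : Z → ℝ, Integrable f ν →
        (C : ℝ≥0∞)⁻¹ * besovEnergy ν f θ 1 ≤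
            (∑' (k : ℕ) (b : 𝓑 k), ENNReal.ofReal ((b : Z × ℝ).2 ^ (-θ)) *
              ∫⁻ y in ball (b : Z × ℝ).1 (b : Z × ℝ).2,
                ENNReal.ofReal |f y - ⨍ w in ball (b : Z × ℝ).1 (b : Z × ℝ).2, f w ∂ν| ∂ν) ∧
          (∑' (k : ℕ) (b : 𝓑 k), ENNReal.ofReal ((b : Z × ℝ).2 ^ (-θ)) *
              ∫⁻ y in ball (b : Z × ℝ).1 (b : Z × ℝ).2,
                ENNReal.ofReal |f y - ⨍ w in ball (b : Z × ℝ).1 (b : Z × ℝ).2, f w ∂ν| ∂ν) ≤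
            (C : ℝ≥0∞) * besovEnergy ν f θ 4 := by
  classical
  rcases isEmpty_or_nonempty Z with hZ | hZ
  · refine ⟨1, fun _ => ∅, le_refl 1, fun k => countable_empty, ?_, ?_, ?_⟩
    · intro k b hb; exact absurd hb (notMem_empty b)
    · intro k z; exact (hZ.false z).elim
    · intro f hfi
      have hν : ν = 0 := Subsingleton.elim ν 0
      have hE : ∀ r : ℝ, besovEnergy ν f θ r = 0 := by
        intro r
        simp [besovEnergy, hν]
      have hS : (∑' (k : ℕ) (b : (∅ : Set (Z × ℝ))),
          ENNReal.ofReal ((b : Z × ℝ).2 ^ (-θ)) *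
            ∫⁻ y in ball (b : Z × ℝ).1 (b : Z × ℝ).2,
              ENNReal.ofReal |f y - ⨍ w in ball (b : Z × ℝ).1 (b : Z × ℝ).2, f w ∂ν| ∂ν) = 0 := by
        simp [tsum_empty]
      rw [hS, hE 1, hE 4]
      simp
  obtain ⟨z₀⟩ := hZ
  obtain ⟨m₀, hm₀⟩ : ∃ m : ℕ, 96 * τ ≤ (2:ℝ) ^ m := by
    obtain ⟨m, hm⟩ := pow_unbounded_of_one_lt (96 * τ) (one_lt_two (α := ℝ))
    exact ⟨m, hm.le⟩
  set D := ENNReal.ofReal C_D with hD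
  set M := max ⌈C_D⌉₊ 1 with hMdef
  have hM1 : 1 ≤ M := le_max_right _ _
  have hDM : D ≤ (M : ℝ≥0∞) := by
    calc D ≤ ENNReal.ofReal ((⌈C_D⌉₊ : ℕ) : ℝ) := ENNReal.ofReal_le_ofReal (Nat.le_ceil C_D)
      _ = ((⌈C_D⌉₊ : ℕ) : ℝ≥0∞) := ENNReal.ofReal_natCast _
      _ ≤ (M : ℝ≥0∞) := by exact_mod_cast Nat.cast_le.mpr (le_max_left _ _)
  set N := M ^ m₀ with hNdef
  set C := 2 + 8 * M ^ 2 + 16 * M ^ 3 * N + N with hCdef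
  have hC2 : 2 ≤ C := by rw [hCdef]; omega
  have hC1 : 1 ≤ C := by omega
  have hNC : N ≤ C := by rw [hCdef]; omega
  have hC0' : (C : ℝ≥0∞) ≠ 0 := by
    simp only [ne_eq, Nat.cast_eq_zero]; omega
  -- dyadic scales
  set ρ : ℕ → ℝ := fun k => (2:ℝ) ^ (-(k : ℤ)) with hρdef
  have hρpos : ∀ k, 0 < ρ k := fun k => zpow_pos (by norm_num) _
  have hρle1 : ∀ k, ρ k ≤ 1 := by
    intro k
    calc ρ k ≤ (2:ℝ) ^ (0 : ℤ) := zpow_le_zpow_right₀ (by norm_num) (by omega)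
      _ = 1 := zpow_zero 2
  have hρhalf : ∀ k, ρ (k + 1) = ρ k / 2 := by
    intro k
    have h1 : (-(((k:ℕ) + 1 : ℕ) : ℤ)) = -(k:ℤ) - 1 := by push_cast; ring
    rw [hρdef]
    simp only []
    rw [h1, zpow_sub₀ (by norm_num : (2:ℝ) ≠ 0), zpow_one]
  have hρanti : ∀ k l : ℕ, k ≤ l → ρ l ≤ ρ k := by
    intro k l hkl
    exact zpow_le_zpow_right₀ (by norm_num) (by omega)
  -- maximal separated sets
  have hSex : ∀ k : ℕ, ∃ S : Set Z, (∀ x ∈ S, ∀ y ∈ S, x ≠ y → ρ k / 8 ≤ dist x y) ∧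
      ∀ z : Z, ∃ x ∈ S, dist z x < ρ k / 8 := by
    intro k
    exact exists_maximal_sep' (ρ k / 8) (by positivity)
  choose S hSsep hScov using hSex
  set 𝓑 : ℕ → Set (Z × ℝ) := fun k => (fun z => (z, 9 / 8 * ρ k)) '' S k with h𝓑def
  have hBrad : ∀ k, ∀ b ∈ 𝓑 k, b.2 = 9 / 8 * ρ k := by
    rintro k b ⟨w, hw, rfl⟩; rfl
  -- finiteness of separated sets in balls
  have hfinball : ∀ (k : ℕ) (z : Z) (R : ℝ), (S k ∩ ball z R).Finite := by
    intro k z R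
    have hsub : S k ∩ ball z R ⊆ S k ∩ ball z (|R| + 1) := by
      refine inter_subset_inter le_rfl (ball_subset_ball ?_)
      have := abs_nonneg R
      have := le_abs_self R
      linarith
    refine Set.Finite.subset ?_ hsub
    set R' := |R| + 1 with hR'
    have hR'pos : 0 < R' := by positivity
    have hR'1 : 1 ≤ R' := by rw [hR']; have := abs_nonneg R; linarith
    obtain ⟨m, hm⟩ := pow_unbounded_of_one_lt (48 * R' / ρ k) (one_lt_two (α := ℝ))
    have h48 : 48 * R' < 2 ^ m * ρ k := by
      have := (div_lt_iff₀ (hρpos k)).mp hm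
      linarith
    have h3 : 3 * R' ≤ 2 ^ m * (ρ k / 8 / 2) := by
      nlinarith [hρpos k]
    refine (sep_card' ν C_D hCD hdbl z R' (ρ k / 8) (by positivity) hR'pos ?_ m h3
      (S k ∩ ball z R') inter_subset_right ?_).1
    · have := hρle1 k
      linarith
    · intro x hx y hy hxy
      exact hSsep k x hx.1 y hy.1 hxy
  have hScnt : ∀ k, (S k).Countable := by
    intro k
    have hcov2 : S k ⊆ ⋃ n : ℕ, S k ∩ ball z₀ (n + 1) := by
      intro x hx
      obtain ⟨n, hn⟩ := exists_nat_gt (dist x z₀)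
      exact mem_iUnion.mpr ⟨n, hx, mem_ball.mpr (by linarith)⟩
    exact Countable.mono hcov2 (countable_iUnion fun n => (hfinball k z₀ (n + 1)).countable)
  have h𝓑cnt : ∀ k, (𝓑 k).Countable := fun k => (hScnt k).image _
  -- overlap
  have hoverτ : ∀ (k : ℕ) (x : Z), {b ∈ 𝓑 k | x ∈ ball b.1 (τ * b.2)}.Finite ∧
      {b ∈ 𝓑 k | x ∈ ball b.1 (τ * b.2)}.ncard ≤ N := by
    intro k x
    have hτpos : 0 < τ := lt_of_lt_of_le one_pos hτ
    have hA : {b ∈ 𝓑 k | x ∈ ball b.1 (τ * b.2)} =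
        (fun z => (z, 9 / 8 * ρ k)) '' (S k ∩ ball x (τ * (9 / 8 * ρ k))) := by
      ext b
      constructor
      · rintro ⟨⟨w, hw, rfl⟩, hxb⟩
        refine ⟨w, ⟨hw, ?_⟩, rfl⟩
        rw [mem_ball] at hxb ⊢
        rw [dist_comm]
        exact hxb
      · rintro ⟨w, ⟨hw, hwx⟩, rfl⟩
        refine ⟨⟨w, hw, rfl⟩, ?_⟩
        rw [mem_ball, dist_comm]
        exact mem_ball.mp hwx
    have hT := sep_card' ν C_D hCD hdbl x (τ * (9 / 8 * ρ k)) (ρ k / 8)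
      (by positivity) (by positivity)
      (by nlinarith [hρpos k])
      m₀
      (by nlinarith [hρpos k, hm₀, hτpos])
      (S k ∩ ball x (τ * (9 / 8 * ρ k))) inter_subset_right
      (fun a ha b hb hab => hSsep k a ha.1 b hb.1 hab)
    constructor
    · rw [hA]; exact hT.1.image _
    · rw [hA]
      calc ((fun z => (z, 9 / 8 * ρ k)) '' (S k ∩ ball x (τ * (9 / 8 * ρ k)))).ncard
          ≤ (S k ∩ ball x (τ * (9 / 8 * ρ k))).ncard := Set.ncard_image_le hT.1
        _ ≤ N := hT.2
  refine ⟨C, 𝓑, hC1, h𝓑cnt, ?_, ?_, ?_⟩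
  · -- radii
    intro k b hb
    have hb2 : b.2 = 9 / 8 * ρ k := hBrad k b hb
    have hCreal : (2 : ℝ) ≤ C := by exact_mod_cast hC2
    have hCpos : (0 : ℝ) < C := by linarith
    constructor
    · rw [hb2]
      have hinv : ((C : ℝ))⁻¹ ≤ 1 := by
        rw [inv_le_one_iff₀]
        right
        linarith
      nlinarith [hρpos k]
    · rw [hb2]
      nlinarith [hρpos k]
  · -- overlap with τ
    intro k z
    exact ⟨(hoverτ k z).1, le_trans (hoverτ k z).2 hNC⟩
  · -- the two inequalities
    intro f hfi
    have hcov' : ∀ k, ∀ x : Z, ∃ b ∈ 𝓑 k, dist x b.1 < ρ k / 8 := by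
      intro k x
      obtain ⟨w, hw, hd⟩ := hScov k x
      exact ⟨(w, 9 / 8 * ρ k), ⟨w, hw, rfl⟩, hd⟩
    set G : ℝ → ℝ≥0∞ := fun t =>
      (∫⁻ x, (ν (ball x t))⁻¹ * ∫⁻ y in ball x t, ENNReal.ofReal |f y - f x| ∂ν ∂ν) *
        ENNReal.ofReal (t ^ (-(1 + θ))) with hGdef
    set Sig : ℕ → ℝ≥0∞ := fun k =>
      ∑' (b : 𝓑 k), ENNReal.ofReal ((b : Z × ℝ).2 ^ (-θ)) *
        ∫⁻ y in ball (b : Z × ℝ).1 (b : Z × ℝ).2,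
          ENNReal.ofReal |f y - ⨍ w in ball (b : Z × ℝ).1 (b : Z × ℝ).2, f w ∂ν| ∂ν
      with hSigdef
    have hlow : ∀ k : ℕ, ∫⁻ t in Ioc (ρ k / 2) (ρ k), G t ≤ 8 * D ^ 2 * Sig k := fun k =>
      lower_scale' ν C_D hCD hdbl θ hθ0 hθ1 f (ρ k) (hρpos k) (𝓑 k) (h𝓑cnt k)
        (hBrad k) (hcov' k)
    have hup : ∀ k : ℕ, Sig k ≤ 16 * D ^ 3 * N *
        ∫⁻ t in Ico (3 * ρ k) (4 * ρ k), G t := by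
      intro k
      refine upper_scale' ν C_D hCD hdbl θ hθ0 hθ1 f hfi (ρ k) (hρpos k) (𝓑 k) (h𝓑cnt k)
        (hBrad k) N ?_
      intro x
      have hsub : {b ∈ 𝓑 k | x ∈ ball b.1 b.2} ⊆ {b ∈ 𝓑 k | x ∈ ball b.1 (τ * b.2)} := by
        rintro b ⟨hb, hxb⟩
        refine ⟨hb, ?_⟩
        refine ball_subset_ball ?_ hxb
        have hb2 : b.2 = 9 / 8 * ρ k := hBrad k b hb
        nlinarith [hρpos k]
      exact ⟨(hoverτ k x).1.subset hsub,
        le_trans (Set.ncard_le_ncard hsub (hoverτ k x).1) (hoverτ k x).2⟩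
    constructor
    · -- lower bound
      have hcover_t : Ioo (0:ℝ) 1 ⊆ ⋃ k : ℕ, Ioc (ρ k / 2) (ρ k) := by
        intro t ht
        obtain ⟨ht0, ht1⟩ := ht
        have hex : ∃ n : ℕ, ρ n / 2 < t := by
          obtain ⟨n, hn⟩ := exists_pow_lt_of_lt_one ht0 (by norm_num : (1/2:ℝ) < 1)
          refine ⟨n, ?_⟩
          have heq : ρ n = (1/2:ℝ) ^ n := by
            rw [hρdef]
            simp only []
            rw [zpow_neg, zpow_natCast, ← inv_pow, one_div]
          rw [heq]
          have : (0:ℝ) < (1/2:ℝ) ^ n := by positivity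
          linarith
        refine mem_iUnion.mpr ⟨Nat.find hex, Nat.find_spec hex, ?_⟩
        rcases Nat.eq_zero_or_pos (Nat.find hex) with h0 | hpos'
        · rw [h0]
          have : ρ 0 = 1 := by rw [hρdef]; norm_num
          rw [this]
          linarith
        · obtain ⟨j, hj⟩ := Nat.exists_eq_succ_of_ne_zero hpos'.ne'
          have hnot := Nat.find_min hex (show j < Nat.find hex by omega)
          push_neg at hnot
          rw [hj, hρhalf j]
          exact hnot
      have h1 : besovEnergy ν f θ 1 ≤ ∑' k : ℕ, ∫⁻ t in Ioc (ρ k / 2) (ρ k), G t := by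
        have e1 : besovEnergy ν f θ 1 = ∫⁻ t in Ioo (0:ℝ) 1, G t := rfl
        rw [e1]
        calc ∫⁻ t in Ioo (0:ℝ) 1, G t
            ≤ ∫⁻ t in ⋃ k : ℕ, Ioc (ρ k / 2) (ρ k), G t :=
              lintegral_mono' (Measure.restrict_mono hcover_t le_rfl) le_rfl
          _ ≤ ∑' k : ℕ, ∫⁻ t in Ioc (ρ k / 2) (ρ k), G t := lintegral_iUnion_le _ _
      have h2 : besovEnergy ν f θ 1 ≤ (C : ℝ≥0∞) * ∑' k : ℕ, Sig k := by
        have h8D2 : 8 * D ^ 2 ≤ (C : ℝ≥0∞) := by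
          calc 8 * D ^ 2 ≤ 8 * (M : ℝ≥0∞) ^ 2 :=
                mul_le_mul_right (pow_le_pow_left' hDM 2) _
            _ = ((8 * M ^ 2 : ℕ) : ℝ≥0∞) := by push_cast; ring
            _ ≤ (C : ℝ≥0∞) := by
                refine Nat.cast_le.mpr ?_
                rw [hCdef]; omega
        calc besovEnergy ν f θ 1 ≤ ∑' k : ℕ, ∫⁻ t in Ioc (ρ k / 2) (ρ k), G t := h1
          _ ≤ ∑' k : ℕ, 8 * D ^ 2 * Sig k := ENNReal.tsum_le_tsum hlow
          _ = 8 * D ^ 2 * ∑' k : ℕ, Sig k := ENNReal.tsum_mul_left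
          _ ≤ (C : ℝ≥0∞) * ∑' k : ℕ, Sig k := mul_le_mul_left h8D2 _
      calc (C : ℝ≥0∞)⁻¹ * besovEnergy ν f θ 1
          ≤ (C : ℝ≥0∞)⁻¹ * ((C : ℝ≥0∞) * ∑' k : ℕ, Sig k) := mul_le_mul_right h2 _
        _ = ∑' k : ℕ, Sig k := by
            rw [← mul_assoc, ENNReal.inv_mul_cancel hC0' (natCast_ne_top C), one_mul]
    · -- upper bound
      have hTsub : ∀ k : ℕ, Ico (3 * ρ k) (4 * ρ k) ⊆ Ioo (0:ℝ) 4 := by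
        intro k t ht
        constructor
        · have := hρpos k; linarith [ht.1]
        · have := hρle1 k; linarith [ht.2]
      have hTdisj : Pairwise (Function.onFun Disjoint
          (fun k : ℕ => Ico (3 * ρ k) (4 * ρ k))) := by
        have hgen : ∀ k l : ℕ, k < l →
            Disjoint (Ico (3 * ρ k) (4 * ρ k)) (Ico (3 * ρ l) (4 * ρ l)) := by
          intro k l hkl
          rw [Set.disjoint_left]
          rintro t ⟨htk1, htk2⟩ ⟨htl1, htl2⟩
          have h1 : ρ l ≤ ρ (k + 1) := hρanti (k+1) l (by omega)
          have h2 : ρ (k + 1) = ρ k / 2 := hρhalf k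
          have := hρpos k
          linarith
        intro k l hkl
        rcases lt_or_gt_of_ne hkl with h | h
        · exact hgen k l h
        · exact (hgen l k h).symm
      have hsum_t : ∑' k : ℕ, ∫⁻ t in Ico (3 * ρ k) (4 * ρ k), G t ≤
          ∫⁻ t in Ioo (0:ℝ) 4, G t := by
        calc ∑' k : ℕ, ∫⁻ t in Ico (3 * ρ k) (4 * ρ k), G t
            = ∫⁻ t, G t ∂(Measure.sum fun k : ℕ => volume.restrict (Ico (3 * ρ k) (4 * ρ k))) :=
              (lintegral_sum_measure _ _).symm
          _ = ∫⁻ t in ⋃ k : ℕ, Ico (3 * ρ k) (4 * ρ k), G t := by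
              rw [← Measure.restrict_iUnion hTdisj (fun k => measurableSet_Ico)]
          _ ≤ ∫⁻ t in Ioo (0:ℝ) 4, G t :=
              lintegral_mono' (Measure.restrict_mono (iUnion_subset hTsub) le_rfl) le_rfl
      have h16D3 : 16 * D ^ 3 * (N : ℝ≥0∞) ≤ (C : ℝ≥0∞) := by
        calc 16 * D ^ 3 * (N : ℝ≥0∞) ≤ 16 * (M : ℝ≥0∞) ^ 3 * (N : ℝ≥0∞) :=
              mul_le_mul_left (mul_le_mul_right (pow_le_pow_left' hDM 3) _) _
          _ = ((16 * M ^ 3 * N : ℕ) : ℝ≥0∞) := by push_cast; ring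
          _ ≤ (C : ℝ≥0∞) := by
              refine Nat.cast_le.mpr ?_
              rw [hCdef]; omega
      have e4 : besovEnergy ν f θ 4 = ∫⁻ t in Ioo (0:ℝ) 4, G t := rfl
      calc ∑' k : ℕ, Sig k
          ≤ ∑' k : ℕ, 16 * D ^ 3 * (N : ℝ≥0∞) * ∫⁻ t in Ico (3 * ρ k) (4 * ρ k), G t :=
            ENNReal.tsum_le_tsum hup
        _ = 16 * D ^ 3 * (N : ℝ≥0∞) * ∑' k : ℕ, ∫⁻ t in Ico (3 * ρ k) (4 * ρ k), G t :=
            ENNReal.tsum_mul_left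
        _ ≤ 16 * D ^ 3 * (N : ℝ≥0∞) * ∫⁻ t in Ioo (0:ℝ) 4, G t :=
            mul_le_mul_right hsum_t _
        _ ≤ (C : ℝ≥0∞) * besovEnergy ν f θ 4 := by
            rw [e4]
            exact mul_le_mul_left h16D3 _
end

section
/- Let u: ℝ → ℝ be the 1-periodic extension of the characteristic function χ_{[0,1/2)}, and define f(x) = Σ_{j=1}^∞ χ_{[1/(j+1), 1/j)}(x) u(4^j x) for x ∈ (0,1). Then f ∈ L^∞(0,1) (hence f ∈ L¹(0,1)), but f does not belong to B^0_{1,1}(0,1): for every R > 0, ∫_0^R ∫_{(0,1)} ⨍_{B(x,t) ∩ (0,1)} |f(y) − f(x)| dy dx dt/t = ∞, where (0,1) is equipped with the Euclidean distance and one-dimensional Lebesgue measure. -/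
open MeasureTheory Metric Set ENNReal

/-- The `1`-periodic extension of the characteristic function `χ_{[0,1/2)}`. -/
noncomputable def uPer (x : ℝ) : ℝ := if Int.fract x < 1 / 2 then 1 else 0

/-- The function `f(x) = Σ_{j≥1} χ_{[1/(j+1), 1/j)}(x) u(4^j x)` on `(0,1)`
(the `j = 0` summand vanishes since `[1/1, 1/0) = [1,0) = ∅` in Lean). -/
noncomputable def fEx (x : ℝ) : ℝ :=
  ∑' j : ℕ, Set.indicator (Set.Ico (1 / ((j : ℝ) + 1)) (1 / (j : ℝ)))
    (fun y => uPer ((4 : ℝ) ^ j * y)) x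




noncomputable def termJ (j : ℕ) (x : ℝ) : ℝ :=
  Set.indicator (Set.Ico (1 / ((j : ℝ) + 1)) (1 / (j : ℝ)))
    (fun y => uPer ((4 : ℝ) ^ j * y)) x

lemma fEx_def (x : ℝ) : fEx x = ∑' j : ℕ, termJ j x := rfl

lemma uPer_nonneg (x : ℝ) : 0 ≤ uPer x := by unfold uPer; split <;> norm_num

lemma uPer_le_one (x : ℝ) : uPer x ≤ 1 := by unfold uPer; split <;> norm_num

lemma uPer_mem (x : ℝ) : uPer x = 0 ∨ uPer x = 1 := by unfold uPer; split <;> simp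

lemma measurable_uPer : Measurable uPer := by
  unfold uPer
  exact Measurable.ite (measurableSet_lt measurable_fract measurable_const)
    measurable_const measurable_const

lemma uPer_periodic : Function.Periodic uPer 1 := by
  intro x; unfold uPer; rw [Int.fract_add_one]

lemma termJ_nonneg (j : ℕ) (x : ℝ) : 0 ≤ termJ j x :=
  Set.indicator_nonneg (fun y _ => uPer_nonneg _) x

lemma termJ_le_one (j : ℕ) (x : ℝ) : termJ j x ≤ 1 := by
  unfold termJ Set.indicator
  split
  · exact uPer_le_one _
  · norm_num

lemma measurable_termJ (j : ℕ) : Measurable (termJ j) :=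
  (measurable_uPer.comp (measurable_const_mul _)).indicator measurableSet_Ico

/-- membership in the `j`-th interval forces `1 ≤ j`. -/
lemma one_le_of_mem {j : ℕ} {x : ℝ} (h : x ∈ Set.Ico (1 / ((j : ℝ) + 1)) (1 / (j : ℝ))) :
    1 ≤ j := by
  rcases Nat.eq_zero_or_pos j with rfl | h1
  · exfalso; simp only [Nat.cast_zero, zero_add, div_one, div_zero] at h
    exact absurd (h.1.trans_lt h.2) (by norm_num)
  · exact h1

lemma notmem_of_ne {j k : ℕ} {x : ℝ} (h : x ∈ Set.Ico (1 / ((j : ℝ) + 1)) (1 / (j : ℝ)))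
    (hk : k ≠ j) : x ∉ Set.Ico (1 / ((k : ℝ) + 1)) (1 / (k : ℝ)) := by
  have hj1 : 1 ≤ j := one_le_of_mem h
  intro hxk
  have hk1 : 1 ≤ k := one_le_of_mem hxk
  have hjR : (1:ℝ) ≤ (j:ℝ) := by exact_mod_cast hj1
  have hkR : (1:ℝ) ≤ (k:ℝ) := by exact_mod_cast hk1
  rcases lt_or_gt_of_ne hk with hlt | hgt
  · -- k < j : x < 1/j ≤ 1/(k+1) ≤ x
    have : (k:ℝ) + 1 ≤ (j:ℝ) := by exact_mod_cast hlt
    have h1 : 1 / (j:ℝ) ≤ 1 / ((k:ℝ) + 1) := by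
      apply one_div_le_one_div_of_le (by linarith) this
    linarith [h.2, hxk.1]
  · -- j < k : x < 1/k ≤ 1/(j+1) ≤ x
    have : (j:ℝ) + 1 ≤ (k:ℝ) := by exact_mod_cast hgt
    have h1 : 1 / (k:ℝ) ≤ 1 / ((j:ℝ) + 1) := by
      apply one_div_le_one_div_of_le (by linarith) this
    linarith [hxk.2, h.1]

lemma termJ_eq_zero_of_ne {j k : ℕ} {x : ℝ}
    (h : x ∈ Set.Ico (1 / ((j : ℝ) + 1)) (1 / (j : ℝ))) (hk : k ≠ j) : termJ k x = 0 :=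
  Set.indicator_of_notMem (notmem_of_ne h hk) _

lemma fEx_eq_of_mem {j : ℕ} {x : ℝ}
    (h : x ∈ Set.Ico (1 / ((j : ℝ) + 1)) (1 / (j : ℝ))) :
    fEx x = uPer ((4:ℝ) ^ j * x) := by
  rw [fEx_def, tsum_eq_single j (fun k hk => termJ_eq_zero_of_ne h hk)]
  exact Set.indicator_of_mem h _

lemma exists_single (x : ℝ) : ∃ j, ∀ k, k ≠ j → termJ k x = 0 := by
  by_cases h : ∃ j : ℕ, x ∈ Set.Ico (1 / ((j : ℝ) + 1)) (1 / (j : ℝ))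
  · obtain ⟨j, hj⟩ := h
    exact ⟨j, fun k hk => termJ_eq_zero_of_ne hj hk⟩
  · push_neg at h
    exact ⟨0, fun k _ => Set.indicator_of_notMem (h k) _⟩

lemma fEx_eq_single {j : ℕ} {x : ℝ} (h : ∀ k, k ≠ j → termJ k x = 0) :
    fEx x = termJ j x := by
  rw [fEx_def, tsum_eq_single j h]

lemma fEx_nonneg (x : ℝ) : 0 ≤ fEx x := by
  obtain ⟨j, hj⟩ := exists_single x
  rw [fEx_eq_single hj]; exact termJ_nonneg j x

lemma fEx_le_one (x : ℝ) : fEx x ≤ 1 := by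
  obtain ⟨j, hj⟩ := exists_single x
  rw [fEx_eq_single hj]; exact termJ_le_one j x

lemma measurable_fEx : Measurable fEx := by
  have key : ∀ x, fEx x = (∑' j : ℕ, ENNReal.ofReal (termJ j x)).toReal := by
    intro x
    obtain ⟨j, hj⟩ := exists_single x
    rw [fEx_eq_single hj, tsum_eq_single j (fun k hk => by rw [hj k hk, ENNReal.ofReal_zero]),
      ENNReal.toReal_ofReal (termJ_nonneg j x)]
  simp_rw [funext key]
  exact (Measurable.ennreal_tsum fun j =>
    (measurable_termJ j).ennreal_ofReal).ennreal_toReal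


lemma g_abs_le_one {c : ℝ} (hc : c = 0 ∨ c = 1) (z : ℝ) : |uPer z - c| ≤ 1 := by
  rcases hc with rfl | rfl <;> rcases uPer_mem z with h | h <;> rw [h] <;> norm_num

lemma integral_h (c : ℝ) (hc : c = 0 ∨ c = 1) :
    ∫ z in (0:ℝ)..1, |uPer z - c| = 1 / 2 := by
  rw [intervalIntegral.integral_of_le (by norm_num : (0:ℝ) ≤ 1),
    MeasureTheory.integral_Ioc_eq_integral_Ioo]
  rcases hc with rfl | rfl
  · have : ∀ z ∈ Set.Ioo (0:ℝ) 1, |uPer z - 0| = Set.indicator (Set.Iio (1/2:ℝ)) (fun _ => (1:ℝ)) z := by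
      intro z hz
      have hfr : Int.fract z = z := Int.fract_eq_self.2 ⟨hz.1.le, hz.2⟩
      unfold uPer
      rw [hfr, Set.indicator_apply]
      simp only [Set.mem_Iio, sub_zero]
      by_cases h : z < 1/2
      · rw [if_pos h, abs_one]
      · rw [if_neg h, abs_zero]
    rw [MeasureTheory.setIntegral_congr_fun measurableSet_Ioo this,
      MeasureTheory.setIntegral_indicator measurableSet_Iio]
    have : Set.Ioo (0:ℝ) 1 ∩ Set.Iio (1/2) = Set.Ioo 0 (1/2) := by
      ext z; simp only [Set.mem_inter_iff, Set.mem_Ioo, Set.mem_Iio]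
      constructor
      · rintro ⟨⟨h1, _⟩, h3⟩; exact ⟨h1, h3⟩
      · rintro ⟨h1, h2⟩; exact ⟨⟨h1, by linarith⟩, h2⟩
    rw [this, MeasureTheory.setIntegral_const, Real.volume_real_Ioo]
    norm_num
  · have : ∀ z ∈ Set.Ioo (0:ℝ) 1, |uPer z - 1| = Set.indicator (Set.Ici (1/2:ℝ)) (fun _ => (1:ℝ)) z := by
      intro z hz
      have hfr : Int.fract z = z := Int.fract_eq_self.2 ⟨hz.1.le, hz.2⟩
      unfold uPer
      rw [hfr, Set.indicator_apply]
      simp only [Set.mem_Ici]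
      by_cases h : z < 1/2
      · rw [if_pos h, if_neg (not_le.2 h)]; norm_num
      · rw [if_neg h, if_pos (not_lt.1 h)]; norm_num
    rw [MeasureTheory.setIntegral_congr_fun measurableSet_Ioo this,
      MeasureTheory.setIntegral_indicator measurableSet_Ici]
    have : Set.Ioo (0:ℝ) 1 ∩ Set.Ici (1/2) = Set.Ico (1/2) 1 := by
      ext z; simp only [Set.mem_inter_iff, Set.mem_Ioo, Set.mem_Ico, Set.mem_Ici]
      constructor
      · rintro ⟨⟨_, h2⟩, h3⟩; exact ⟨h3, h2⟩
      · rintro ⟨h1, h2⟩; exact ⟨⟨by linarith, h2⟩, h1⟩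
    rw [this, MeasureTheory.setIntegral_const, Real.volume_real_Ico]
    norm_num

lemma g_intervalIntegrable (j : ℕ) {c : ℝ} (hc : c = 0 ∨ c = 1) :
    ∀ t₁ t₂ : ℝ, IntervalIntegrable (fun y => |uPer ((4:ℝ)^j * y) - c|) volume t₁ t₂ := by
  intro t₁ t₂
  rw [intervalIntegrable_iff]
  apply Integrable.mono' (g := fun _ => (1:ℝ))
  · exact integrableOn_const measure_Ioc_lt_top.ne
  · exact (((measurable_uPer.comp (measurable_const_mul _)).sub measurable_const).abs).aestronglyMeasurable
  · filter_upwards with y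
    rw [Real.norm_eq_abs, abs_abs]
    exact g_abs_le_one hc _

lemma osc_lower (j : ℕ) (c : ℝ) (hc : c = 0 ∨ c = 1) (a b : ℝ)
    (h8 : 8 * ((4:ℝ)^j)⁻¹ ≤ b - a) :
    3 / 8 * (b - a) ≤ ∫ y in Set.Ioo a b, |uPer ((4:ℝ)^j * y) - c| := by
  set p : ℝ := ((4:ℝ)^j)⁻¹ with hpdef
  have hp : 0 < p := by positivity
  have hab : a < b := by nlinarith
  set g : ℝ → ℝ := fun y => |uPer ((4:ℝ)^j * y) - c| with hgdef
  have hgnn : ∀ y, 0 ≤ g y := fun y => abs_nonneg _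
  have hgle : ∀ y, g y ≤ 1 := fun y => g_abs_le_one hc _
  have hgper : Function.Periodic g p := by
    intro y
    have : (4:ℝ)^j * (y + p) = (4:ℝ)^j * y + 1 := by
      rw [mul_add, mul_inv_cancel₀ (by positivity : (4:ℝ)^j ≠ 0)]
    simp only [hgdef, this, uPer_periodic ((4:ℝ)^j * y)]
  have hgint := g_intervalIntegrable j hc
  -- value of integral over one period
  have hper_int : ∫ x in (0:ℝ)..p, g x = p * (1/2) := by
    rw [hgdef]
    rw [intervalIntegral.integral_comp_mul_left (fun z => |uPer z - c|)
      (by positivity : (4:ℝ)^j ≠ 0)]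
    rw [mul_zero, mul_inv_cancel₀ (by positivity : (4:ℝ)^j ≠ 0), integral_h c hc]
    simp [hpdef, smul_eq_mul]
  -- the starting point
  set k : ℤ := ⌈a / p⌉ with hk
  set s : ℝ := k * p with hs
  have hs1 : a ≤ s := by
    rw [hs]
    calc a = (a / p) * p := by field_simp
    _ ≤ (k:ℝ) * p := mul_le_mul_of_nonneg_right (Int.le_ceil _) hp.le
  have hs2 : s < a + p := by
    have := Int.ceil_lt_add_one (a / p)
    calc s = (k:ℝ) * p := rfl
    _ < (a / p + 1) * p := by exact mul_lt_mul_of_pos_right this hp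
    _ = a + p := by field_simp
  set m : ℕ := ⌊(b - a) / p⌋₊ with hm
  have hm8 : 8 ≤ m := by
    apply Nat.le_floor
    rw [le_div_iff₀ hp]
    push_cast
    linarith
  have hmle : (m : ℝ) * p ≤ b - a := by
    rw [← le_div_iff₀ hp]
    exact Nat.floor_le (div_nonneg (by linarith) hp.le)
  have hmgt : (b - a) / p < (m : ℝ) + 1 := Nat.lt_floor_add_one _
  set n : ℕ := m - 1 with hn
  have hn1 : (n : ℝ) = (m : ℝ) - 1 := by
    rw [hn, Nat.cast_sub (by omega)]; norm_num
  have hnp : 0 ≤ (n:ℝ) * p := by positivity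
  have hsub : Set.Ioc s (s + n * p) ⊆ Set.Ioo a b := by
    intro y hy
    constructor
    · exact lt_of_le_of_lt hs1 hy.1
    · calc y ≤ s + n * p := hy.2
        _ < (a + p) + n * p := by linarith
        _ = a + (m:ℝ) * p := by rw [hn1]; ring
        _ ≤ b := by linarith
  have hIoo_int : IntegrableOn g (Set.Ioo a b) volume := by
    have := (hgint a b)
    rw [intervalIntegrable_iff, Set.uIoc_of_le hab.le] at this
    exact this.mono_set Set.Ioo_subset_Ioc_self
  have step1 : ∫ y in Set.Ioc s (s + n * p), g y ≤ ∫ y in Set.Ioo a b, g y := by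
    apply MeasureTheory.setIntegral_mono_set hIoo_int
    · filter_upwards with y using hgnn y
    · exact HasSubset.Subset.eventuallyLE hsub
  have step2 : ∫ y in Set.Ioc s (s + n * p), g y = (n : ℝ) * (p * (1/2)) := by
    rw [← intervalIntegral.integral_of_le (by linarith)]
    have := hgper.intervalIntegral_add_zsmul_eq (n : ℤ) s hgint
    rw [show s + (n:ℝ) * p = s + (n : ℤ) • p by push_cast [zsmul_eq_mul]; ring] at *
    rw [this, hgper.intervalIntegral_add_eq s 0, zero_add, hper_int]
    push_cast [zsmul_eq_mul]
    ring
  have hplarge : p ≤ (b - a) / 8 := by linarith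
  have : (3:ℝ)/8 * (b - a) ≤ (n : ℝ) * (p * (1/2)) := by
    rw [hn1]
    have h1 : (b - a) - p < (m:ℝ) * p := by
      rw [div_lt_iff₀ hp] at hmgt
      nlinarith
    nlinarith
  linarith [step1, step2.symm.le.trans step1]


lemma Ioo_subset_unit {j : ℕ} (hj : 1 ≤ j) :
    Set.Ioo (1/((j:ℝ)+1)) (1/(j:ℝ)) ⊆ Set.Ioo (0:ℝ) 1 := by
  have hjR : (1:ℝ) ≤ (j:ℝ) := by exact_mod_cast hj
  intro y hy
  constructor
  · have : 0 < 1/((j:ℝ)+1) := by positivity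
    linarith [hy.1]
  · have : 1/(j:ℝ) ≤ 1 := by
      rw [div_le_one (by linarith)]; exact hjR
    linarith [hy.2]

lemma phi_lower {j : ℕ} (hj : 1 ≤ j) {x t : ℝ} (ht : 0 < t)
    (hsub : Set.Ioo (x - t) (x + t) ⊆ Set.Ioo (1/((j:ℝ)+1)) (1/(j:ℝ)))
    (hp8 : 8 * ((4:ℝ)^j)⁻¹ ≤ 2 * t) :
    ENNReal.ofReal (3/8) ≤
      ((volume.restrict (Set.Ioo (0:ℝ) 1)) (ball x t))⁻¹ *
        ∫⁻ y in ball x t, ENNReal.ofReal |fEx y - fEx x|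
          ∂(volume.restrict (Set.Ioo (0:ℝ) 1)) := by
  have hball : ball x t = Set.Ioo (x - t) (x + t) := Real.ball_eq_Ioo x t
  have hunit : Set.Ioo (x - t) (x + t) ⊆ Set.Ioo (0:ℝ) 1 :=
    hsub.trans (Ioo_subset_unit hj)
  have hxmem : x ∈ Set.Ioo (x - t) (x + t) := ⟨by linarith, by linarith⟩
  have hIco : ∀ y ∈ Set.Ioo (x - t) (x + t), fEx y = uPer ((4:ℝ)^j * y) := by
    intro y hy
    exact fEx_eq_of_mem ⟨(hsub hy).1.le, (hsub hy).2⟩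
  set c : ℝ := uPer ((4:ℝ)^j * x) with hcdef
  have hc : c = 0 ∨ c = 1 := uPer_mem _
  have hfx : fEx x = c := hIco x hxmem
  -- measure bound
  have hmeas : (volume.restrict (Set.Ioo (0:ℝ) 1)) (ball x t) ≤ ENNReal.ofReal (2 * t) := by
    rw [Measure.restrict_apply measurableSet_ball]
    calc volume (ball x t ∩ Set.Ioo (0:ℝ) 1) ≤ volume (ball x t) :=
      measure_mono Set.inter_subset_left
    _ = ENNReal.ofReal (2 * t) := Real.volume_ball x t
  -- rewrite inner lintegral
  have hres : (volume.restrict (Set.Ioo (0:ℝ) 1)).restrict (ball x t)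
      = volume.restrict (ball x t) := by
    rw [Measure.restrict_restrict measurableSet_ball,
      Set.inter_eq_self_of_subset_left (by rw [hball]; exact hunit)]
  have hlint : ∫⁻ y in ball x t, ENNReal.ofReal |fEx y - fEx x|
      ∂(volume.restrict (Set.Ioo (0:ℝ) 1))
      = ∫⁻ y in Set.Ioo (x - t) (x + t), ENNReal.ofReal |uPer ((4:ℝ)^j * y) - c| := by
    show ∫⁻ y, ENNReal.ofReal |fEx y - fEx x|
        ∂((volume.restrict (Set.Ioo (0:ℝ) 1)).restrict (ball x t)) = _
    rw [hres, hball]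
    apply MeasureTheory.setLIntegral_congr_fun measurableSet_Ioo
    intro y hy
    dsimp only
    rw [hIco y hy, hfx]
  -- convert to a real integral and bound below
  have hint : IntegrableOn (fun y => |uPer ((4:ℝ)^j * y) - c|) (Set.Ioo (x-t) (x+t)) volume := by
    have := g_intervalIntegrable j hc (x - t) (x + t)
    rw [intervalIntegrable_iff, Set.uIoc_of_le (by linarith)] at this
    exact this.mono_set Set.Ioo_subset_Ioc_self
  have hlow : ENNReal.ofReal (3/8 * (2*t)) ≤
      ∫⁻ y in Set.Ioo (x - t) (x + t), ENNReal.ofReal |uPer ((4:ℝ)^j * y) - c| := by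
    rw [← MeasureTheory.ofReal_integral_eq_lintegral_ofReal hint
      (by filter_upwards with y using abs_nonneg _)]
    apply ENNReal.ofReal_le_ofReal
    have := osc_lower j c hc (x - t) (x + t) (by linarith)
    calc 3/8 * (2*t) = 3/8 * ((x+t) - (x-t)) := by ring_nf
    _ ≤ _ := this
  -- combine
  have hinv : (ENNReal.ofReal (2*t))⁻¹ ≤
      ((volume.restrict (Set.Ioo (0:ℝ) 1)) (ball x t))⁻¹ :=
    ENNReal.inv_le_inv' hmeas
  calc ENNReal.ofReal (3/8)
      = (ENNReal.ofReal (2*t))⁻¹ * ENNReal.ofReal (3/8 * (2*t)) := by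
        rw [← ENNReal.ofReal_inv_of_pos (by linarith), ← ENNReal.ofReal_mul
          (by positivity)]
        congr 1
        field_simp
    _ ≤ _ := by
        rw [hlint]
        exact mul_le_mul' hinv hlow

lemma nat_pow_ge : ∀ i : ℕ, 6 ≤ i → 2 * i + 1 ≤ 2 ^ (i - 2) := by
  intro i hi
  induction i with
  | zero => omega
  | succ n ih =>
    rcases Nat.lt_or_ge n 6 with h | h
    · interval_cases n <;> simp_all <;> omega
    · have h2 : 2 ^ (n - 2) ≥ 2 := by
        calc 2 ^ (n-2) ≥ 2^1 := Nat.pow_le_pow_right (by norm_num) (by omega)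
        _ = 2 := rfl
      have := ih (by omega)
      have : 2 * (n+1) + 1 ≤ 2^(n-2) + 2^(n-2) := by omega
      calc 2 * (n+1) + 1 ≤ 2^(n-2) + 2^(n-2) := this
      _ = 2^(n-2+1) := by ring
      _ = 2^(n+1-2) := by congr 1; omega

lemma nat_prod_le (i j : ℕ) (hi : 2 ≤ i) (hj : j ≤ 2^(i-2)) :
    8 * (j * (j+1)) ≤ 4^i := by
  have h1 : j + 1 ≤ 2^(i-1) := by
    have : 2^(i-2) + 1 ≤ 2^(i-1) := by
      have : (2:ℕ)^(i-2) ≥ 1 := Nat.one_le_two_pow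
      calc 2^(i-2) + 1 ≤ 2^(i-2) + 2^(i-2) := by omega
      _ = 2^(i-2+1) := by ring
      _ = 2^(i-1) := by congr 1; omega
    omega
  calc 8 * (j * (j+1)) ≤ 8 * (2^(i-2) * 2^(i-1)) :=
    Nat.mul_le_mul_left _ (Nat.mul_le_mul hj h1)
  _ = 2^(3 + ((i-2)+(i-1))) := by rw [pow_add, pow_add]; ring
  _ = 2^(2*i) := by congr 1; omega
  _ = 4^i := by rw [pow_mul]; norm_num

lemma telescope (u : ℕ → ℝ) (a : ℕ) : ∀ N : ℕ, a ≤ N + 1 →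
    ∑ j ∈ Finset.Icc a N, (u j - u (j+1)) = u a - u (N+1) := by
  intro N
  induction N with
  | zero =>
    intro ha
    interval_cases a
    · simp
    · simp
  | succ n ih =>
    intro ha
    rcases Nat.lt_or_ge (n+1) a with h | h
    · have : a = n + 2 := by omega
      subst this
      rw [Finset.Icc_eq_empty (by omega)]
      simp
    · rw [Finset.sum_Icc_succ_top h, ih (by omega)]
      ring

lemma spatial_lower (i : ℕ) (hi : 6 ≤ i) {t : ℝ}
    (ht : t ∈ Set.Ioo (((4:ℝ)^i)⁻¹) (2*((4:ℝ)^i)⁻¹)) :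
    ENNReal.ofReal (3/(32*((i:ℝ)+1))) ≤
      ∫⁻ x, ((volume.restrict (Set.Ioo (0:ℝ) 1)) (ball x t))⁻¹ *
        ∫⁻ y in ball x t, ENNReal.ofReal |fEx y - fEx x|
          ∂(volume.restrict (Set.Ioo (0:ℝ) 1)) ∂(volume.restrict (Set.Ioo (0:ℝ) 1)) := by
  set ε : ℝ := ((4:ℝ)^i)⁻¹ with hε
  have hε0 : 0 < ε := by positivity
  have ht1 : ε < t := ht.1
  have ht2 : t < 2 * ε := ht.2
  have ht0 : 0 < t := lt_trans hε0 ht1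
  set Φ : ℝ → ℝ≥0∞ := fun x => ((volume.restrict (Set.Ioo (0:ℝ) 1)) (ball x t))⁻¹ *
        ∫⁻ y in ball x t, ENNReal.ofReal |fEx y - fEx x|
          ∂(volume.restrict (Set.Ioo (0:ℝ) 1)) with hΦ
  set N : ℕ := 2^(i-2) with hN
  set S : Finset ℕ := Finset.Icc (i+1) N with hS
  set M : ℕ → Set ℝ := fun j => Set.Ioo (1/((j:ℝ)+1) + 2*ε) (1/(j:ℝ) - 2*ε) with hM
  have hNbig : 2*i + 1 ≤ N := nat_pow_ge i hi
  -- interval length estimate for j ∈ S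
  have hd : ∀ j ∈ S, 8 * ε ≤ 1/(j:ℝ) - 1/((j:ℝ)+1) := by
    intro j hj
    rw [hS, Finset.mem_Icc] at hj
    have hj1 : (1:ℝ) ≤ (j:ℝ) := by exact_mod_cast le_trans (by omega) hj.1
    have hnat : (8:ℝ) * ((j:ℝ) * ((j:ℝ)+1)) ≤ (4:ℝ)^i := by
      have := nat_prod_le i j (by omega) hj.2
      calc (8:ℝ) * ((j:ℝ) * ((j:ℝ)+1)) = ((8 * (j * (j+1)) : ℕ) : ℝ) := by push_cast; ring
      _ ≤ ((4^i : ℕ) : ℝ) := by exact_mod_cast this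
      _ = (4:ℝ)^i := by push_cast; ring
    have heq : 1/(j:ℝ) - 1/((j:ℝ)+1) = 1/((j:ℝ) * ((j:ℝ)+1)) := by
      field_simp
      ring
    have h48 : (8:ℝ) * ((4:ℝ)^i)⁻¹ = 8 / (4:ℝ)^i := by ring
    rw [heq, hε, h48, div_le_div_iff₀ (by positivity) (by positivity)]
    nlinarith
  have hj1S : ∀ j ∈ S, 1 ≤ j := by
    intro j hj; rw [hS, Finset.mem_Icc] at hj; omega
  have hMsub : ∀ j, M j ⊆ Set.Ioo (1/((j:ℝ)+1)) (1/(j:ℝ)) := by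
    intro j y hy
    exact ⟨by linarith [hy.1], by linarith [hy.2]⟩
  -- pointwise bound on M j
  have hpoint : ∀ j ∈ S, ∀ x ∈ M j, ENNReal.ofReal (3/8) ≤ Φ x := by
    intro j hj x hx
    have hj' := hj1S j hj
    rw [hS, Finset.mem_Icc] at hj
    apply phi_lower hj' ht0
    · intro y hy
      constructor
      · have h1 := hx.1
        have h2 := hy.1
        linarith
      · have h1 := hx.2
        have h2 := hy.2
        linarith
    · have h4 : (4:ℝ)^(i+1) ≤ (4:ℝ)^j := by
        apply pow_le_pow_right₀ (by norm_num) hj.1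
      have hinv : ((4:ℝ)^j)⁻¹ ≤ ((4:ℝ)^(i+1))⁻¹ := by
        apply inv_anti₀ (by positivity) h4
      have : ((4:ℝ)^(i+1))⁻¹ = ε / 4 := by
        rw [hε, pow_succ]
        field_simp
      rw [this] at hinv
      linarith
  -- measurability / disjointness
  have hMmeas : ∀ j ∈ S, MeasurableSet (M j) := fun j _ => measurableSet_Ioo
  have hdisj : (S : Set ℕ).PairwiseDisjoint M := by
    intro j hjS k hkS hjk
    apply Set.disjoint_left.2
    intro x hxj hxk
    have h1 := hMsub j hxj
    have h2 := hMsub k hxk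
    -- both intervals Ioo (1/(j+1)) (1/j) and same for k, disjoint for j ≠ k
    have hj1 : 1 ≤ j := hj1S j (by exact_mod_cast hjS)
    have hk1 : 1 ≤ k := hj1S k (by exact_mod_cast hkS)
    have hjR : (1:ℝ) ≤ (j:ℝ) := by exact_mod_cast hj1
    have hkR : (1:ℝ) ≤ (k:ℝ) := by exact_mod_cast hk1
    rcases lt_or_gt_of_ne hjk with hlt | hgt
    · have : (j:ℝ) + 1 ≤ (k:ℝ) := by exact_mod_cast hlt
      have : 1 / (k:ℝ) ≤ 1 / ((j:ℝ) + 1) :=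
        one_div_le_one_div_of_le (by linarith) this
      linarith [h1.1, h2.2]
    · have : (k:ℝ) + 1 ≤ (j:ℝ) := by exact_mod_cast hgt
      have : 1 / (j:ℝ) ≤ 1 / ((k:ℝ) + 1) :=
        one_div_le_one_div_of_le (by linarith) this
      linarith [h1.2, h2.1]
  -- volume lower bound
  have hvol : ∀ j ∈ S, ENNReal.ofReal (3/16 * (1/(j:ℝ) - 1/((j:ℝ)+1))) ≤
      ENNReal.ofReal (3/8) * volume (M j) := by
    intro j hj
    rw [hM]
    simp only
    rw [Real.volume_Ioo, ← ENNReal.ofReal_mul (by norm_num)]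
    apply ENNReal.ofReal_le_ofReal
    have := hd j hj
    nlinarith
  -- main chain
  calc ENNReal.ofReal (3/(32*((i:ℝ)+1)))
      ≤ ENNReal.ofReal (∑ j ∈ S, 3/16 * (1/(j:ℝ) - 1/((j:ℝ)+1))) := by
        apply ENNReal.ofReal_le_ofReal
        have hsum : ∑ j ∈ S, 3/16 * (1/(j:ℝ) - 1/((j:ℝ)+1))
            = 3/16 * (1/((i:ℝ)+1) - 1/((N:ℝ)+1)) := by
          rw [← Finset.mul_sum]
          congr 1
          have := telescope (fun j => 1/(j:ℝ)) (i+1) N (by omega)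
          have hcongr : ∑ j ∈ Finset.Icc (i+1) N, (1/(j:ℝ) - 1/((j:ℝ)+1))
              = ∑ j ∈ Finset.Icc (i+1) N, ((fun j : ℕ => 1/(j:ℝ)) j - (fun j : ℕ => 1/(j:ℝ)) (j+1)) := by
            apply Finset.sum_congr rfl
            intro j _
            push_cast
            ring
          rw [hS, hcongr, this]
          push_cast
          ring
        rw [hsum]
        have hN1 : 2*((i:ℝ)+1) ≤ (N:ℝ)+1 := by
          have : (2*i+1 : ℕ) ≤ N := hNbig
          have : ((2*i+1 : ℕ) : ℝ) ≤ (N:ℝ) := by exact_mod_cast this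
          push_cast at this
          linarith
        have hiR : (0:ℝ) < (i:ℝ)+1 := by positivity
        have h2 : 1/((N:ℝ)+1) ≤ 1/(2*((i:ℝ)+1)) :=
          one_div_le_one_div_of_le (by linarith) hN1
        have h3 : 3/16 * (1/((i:ℝ)+1) - 1/(2*((i:ℝ)+1))) = 3/(32*((i:ℝ)+1)) := by
          field_simp
          ring
        linarith [h3]
    _ = ∑ j ∈ S, ENNReal.ofReal (3/16 * (1/(j:ℝ) - 1/((j:ℝ)+1))) := by
        apply ENNReal.ofReal_sum_of_nonneg
        intro j hj
        have := hd j hj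
        nlinarith
    _ ≤ ∑ j ∈ S, ENNReal.ofReal (3/8) * volume (M j) :=
        Finset.sum_le_sum hvol
    _ = ∑ j ∈ S, ∫⁻ _x in M j, ENNReal.ofReal (3/8) ∂volume := by
        apply Finset.sum_congr rfl
        intro j _
        rw [MeasureTheory.setLIntegral_const]
    _ ≤ ∑ j ∈ S, ∫⁻ x in M j, Φ x ∂volume := by
        apply Finset.sum_le_sum
        intro j hj
        apply MeasureTheory.lintegral_mono_ae
        rw [MeasureTheory.ae_restrict_iff' (hMmeas j hj)]
        filter_upwards with x hx
        exact hpoint j hj x hx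
    _ = ∫⁻ x in ⋃ j ∈ S, M j, Φ x ∂volume :=
        (MeasureTheory.lintegral_biUnion_finset hdisj hMmeas Φ).symm
    _ ≤ ∫⁻ x in Set.Ioo (0:ℝ) 1, Φ x ∂volume := by
        apply MeasureTheory.lintegral_mono_set
        apply Set.iUnion₂_subset
        intro j hj
        exact (hMsub j).trans (Ioo_subset_unit (hj1S j hj))
    _ = _ := rfl


lemma harmonic_ennreal (i₀ : ℕ) :
    (∑' k : ℕ, ENNReal.ofReal (3/(64*((i₀+k+1 : ℕ):ℝ)))) = ⊤ := by
  by_contra h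
  have hsum : Summable (fun k : ℕ => Real.toNNReal (3/(64*((i₀+k+1 : ℕ):ℝ)))) := by
    rw [← ENNReal.tsum_coe_ne_top_iff_summable]
    exact h
  have hsumR : Summable (fun k : ℕ => 3/(64*((i₀+k+1 : ℕ):ℝ))) := by
    have := NNReal.summable_coe.2 hsum
    convert this using 2 with k
    rw [Real.coe_toNNReal _ (by positivity)]
  have h2 : Summable (fun k : ℕ => ((i₀+k+1 : ℕ):ℝ)⁻¹) := by
    have := hsumR.mul_left (64/3)
    convert this using 2 with k
    push_cast
    case e'_5 => field_simp
    case e'_3 => rfl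
  have h3 : Summable (fun k : ℕ => ((k + (i₀+1) : ℕ):ℝ)⁻¹) := by
    convert h2 using 2 with k
    push_cast
    ring
  have h4 : Summable (fun n : ℕ => ((n:ℕ):ℝ)⁻¹) :=
    (_root_.summable_nat_add_iff (f := fun n : ℕ => ((n:ℕ):ℝ)⁻¹) (i₀+1)).1 h3
  exact Real.not_summable_natCast_inv h4

lemma besov_infinite (R : ℝ) (hR : 0 < R) :
    (∫⁻ t in Set.Ioo (0 : ℝ) R,
        (∫⁻ x, ((volume.restrict (Set.Ioo (0 : ℝ) 1)) (ball x t))⁻¹ *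
            ∫⁻ y in ball x t, ENNReal.ofReal |fEx y - fEx x|
              ∂(volume.restrict (Set.Ioo (0 : ℝ) 1)) ∂(volume.restrict (Set.Ioo (0 : ℝ) 1))) *
          ENNReal.ofReal t⁻¹) = ⊤ := by
  obtain ⟨n, hn⟩ := pow_unbounded_of_one_lt (2/R) (by norm_num : (1:ℝ) < 4)
  set i₀ : ℕ := max 6 n with hi₀
  have hi₀6 : 6 ≤ i₀ := le_max_left _ _
  have hpow : 2/R < (4:ℝ)^i₀ :=
    lt_of_lt_of_le hn (pow_le_pow_right₀ (by norm_num) (le_max_right _ _))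
  have hR2 : 2*((4:ℝ)^i₀)⁻¹ < R := by
    rw [div_lt_iff₀ hR] at hpow
    have h4 : (0:ℝ) < (4:ℝ)^i₀ := by positivity
    rw [mul_inv_lt_iff₀ h4]
    nlinarith
  set F : ℝ → ℝ≥0∞ := fun t =>
    (∫⁻ x, ((volume.restrict (Set.Ioo (0 : ℝ) 1)) (ball x t))⁻¹ *
        ∫⁻ y in ball x t, ENNReal.ofReal |fEx y - fEx x|
          ∂(volume.restrict (Set.Ioo (0 : ℝ) 1)) ∂(volume.restrict (Set.Ioo (0 : ℝ) 1))) *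
      ENNReal.ofReal t⁻¹ with hF
  set T : ℕ → Set ℝ := fun k => Set.Ioo (((4:ℝ)^(i₀+k))⁻¹) (2*((4:ℝ)^(i₀+k))⁻¹) with hT
  have hTmeas : ∀ k, MeasurableSet (T k) := fun k => measurableSet_Ioo
  have hTmono : ∀ k l : ℕ, k < l → 2*((4:ℝ)^(i₀+l))⁻¹ ≤ ((4:ℝ)^(i₀+k))⁻¹ := by
    intro k l hkl
    have h1 : (4:ℝ)^(i₀+k+1) ≤ (4:ℝ)^(i₀+l) :=
      pow_le_pow_right₀ (by norm_num) (by omega)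
    have h2 : ((4:ℝ)^(i₀+l))⁻¹ ≤ ((4:ℝ)^(i₀+k+1))⁻¹ :=
      inv_anti₀ (by positivity) h1
    have h3 : ((4:ℝ)^(i₀+k+1))⁻¹ = ((4:ℝ)^(i₀+k))⁻¹/4 := by
      rw [pow_succ]
      field_simp
    have h4 : (0:ℝ) < ((4:ℝ)^(i₀+k))⁻¹ := by positivity
    nlinarith
  have hTdisj : Pairwise (Function.onFun Disjoint T) := by
    intro k l hkl
    have key : ∀ k l : ℕ, k < l → Disjoint (T k) (T l) := by
      intro k l hkl'
      apply Set.disjoint_left.2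
      intro x hxk hxl
      have := hTmono k l hkl'
      have h1 := hxk.1
      have h2 := hxl.2
      linarith
    rcases lt_or_gt_of_ne hkl with h | h
    · exact key k l h
    · exact (key l k h).symm
  have hTsub : (⋃ k, T k) ⊆ Set.Ioo (0:ℝ) R := by
    apply Set.iUnion_subset
    intro k x hx
    constructor
    · have : (0:ℝ) < ((4:ℝ)^(i₀+k))⁻¹ := by positivity
      linarith [hx.1]
    · have h1 : (4:ℝ)^i₀ ≤ (4:ℝ)^(i₀+k) := pow_le_pow_right₀ (by norm_num) (by omega)
      have h2 : ((4:ℝ)^(i₀+k))⁻¹ ≤ ((4:ℝ)^i₀)⁻¹ := inv_anti₀ (by positivity) h1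
      have := hx.2
      linarith
  -- lower bound on each piece
  have hpiece : ∀ k : ℕ, ENNReal.ofReal (3/(64*((i₀+k+1 : ℕ):ℝ)))
      ≤ ∫⁻ t in T k, F t := by
    intro k
    set i : ℕ := i₀ + k with hi
    have hi6 : 6 ≤ i := by omega
    have hlow : ∀ t ∈ T k,
        ENNReal.ofReal (3/(32*((i:ℝ)+1))) * ENNReal.ofReal ((2*((4:ℝ)^i)⁻¹)⁻¹) ≤ F t := by
      intro t ht
      have h1 := spatial_lower i hi6 ht
      have htpos : 0 < t := lt_trans (by positivity) ht.1
      have h2 : ENNReal.ofReal ((2*((4:ℝ)^i)⁻¹)⁻¹) ≤ ENNReal.ofReal t⁻¹ := by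
        apply ENNReal.ofReal_le_ofReal
        apply inv_anti₀ htpos
        exact ht.2.le
      exact mul_le_mul' h1 h2
    calc ENNReal.ofReal (3/(64*((i₀+k+1 : ℕ):ℝ)))
        = ENNReal.ofReal (3/(32*((i:ℝ)+1))) * ENNReal.ofReal ((2*((4:ℝ)^i)⁻¹)⁻¹)
            * ENNReal.ofReal (((4:ℝ)^i)⁻¹) := by
          rw [← ENNReal.ofReal_mul (by positivity), ← ENNReal.ofReal_mul (by positivity)]
          congr 1
          have h4 : (0:ℝ) < (4:ℝ)^i := by positivity
          push_cast
          rw [hi]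
          field_simp
          push_cast
          ring
      _ = ENNReal.ofReal (3/(32*((i:ℝ)+1))) * ENNReal.ofReal ((2*((4:ℝ)^i)⁻¹)⁻¹)
            * volume (T k) := by
          rw [hT]
          simp only
          rw [Real.volume_Ioo]
          congr 1
          rw [hi]
          ring_nf
      _ = ∫⁻ _t in T k, (ENNReal.ofReal (3/(32*((i:ℝ)+1)))
            * ENNReal.ofReal ((2*((4:ℝ)^i)⁻¹)⁻¹)) ∂volume := by
          rw [MeasureTheory.setLIntegral_const]
      _ ≤ ∫⁻ t in T k, F t := by
          apply MeasureTheory.lintegral_mono_ae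
          rw [MeasureTheory.ae_restrict_iff' (hTmeas k)]
          filter_upwards with t ht
          exact hlow t ht
  -- conclude
  rw [← top_le_iff]
  calc (⊤ : ℝ≥0∞) = ∑' k : ℕ, ENNReal.ofReal (3/(64*((i₀+k+1 : ℕ):ℝ))) :=
        (harmonic_ennreal i₀).symm
    _ ≤ ∑' k : ℕ, ∫⁻ t in T k, F t := ENNReal.tsum_le_tsum hpiece
    _ = ∫⁻ t in ⋃ k, T k, F t := (MeasureTheory.lintegral_iUnion hTmeas hTdisj F).symm
    _ ≤ ∫⁻ t in Set.Ioo (0:ℝ) R, F t := MeasureTheory.lintegral_mono_set hTsub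


/-- The function `fEx` is in `L^∞(0,1)` (hence in `L¹(0,1)`), but it does
not belong to `B^0_{1,1}(0,1)`: for every `R > 0` its Besov energy of smoothness `0`
on `(0,1)` (with the Euclidean distance and one-dimensional Lebesgue measure) is infinite. -/
theorem stmt_9 :
    MemLp fEx ⊤ (volume.restrict (Set.Ioo (0 : ℝ) 1)) ∧
    Integrable fEx (volume.restrict (Set.Ioo (0 : ℝ) 1)) ∧
    ∀ R : ℝ, 0 < R →
      (∫⁻ t in Set.Ioo (0 : ℝ) R,
        (∫⁻ x, ((volume.restrict (Set.Ioo (0 : ℝ) 1)) (ball x t))⁻¹ *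
            ∫⁻ y in ball x t, ENNReal.ofReal |fEx y - fEx x|
              ∂(volume.restrict (Set.Ioo (0 : ℝ) 1)) ∂(volume.restrict (Set.Ioo (0 : ℝ) 1))) *
          ENNReal.ofReal t⁻¹) = ⊤ := by
  have hmeml : MemLp fEx ⊤ (volume.restrict (Set.Ioo (0 : ℝ) 1)) := by
    apply memLp_top_of_bound measurable_fEx.aestronglyMeasurable 1
    filter_upwards with x
    rw [Real.norm_eq_abs, abs_of_nonneg (fEx_nonneg x)]
    exact fEx_le_one x
  haveI : IsFiniteMeasure (volume.restrict (Set.Ioo (0 : ℝ) 1)) :=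
    ⟨by rw [Measure.restrict_apply_univ, Real.volume_Ioo]; norm_num⟩
  exact ⟨hmeml, hmeml.integrable le_top, fun R hR => besov_infinite R hR⟩
end
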